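/- arXiv:2103.12917 — 7 statements merged into one kernel-verified Lean document; each statement's English description precedes it below -/
import Mathlib

section
/- Let (p_k : k ∈ ω) be a family of pairwise Rudin–Keisler incomparable selective ultrafilters on ω. For each k ∈ ω let (a_{k,i} : i ∈ ω) be a strictly increasing sequence in ω such that {a_{k,i} : i ∈ ω} ∈ p_k and i < a_{k,i} for all i ∈ ω. Then there exist sets (I_k : k ∈ ω) of natural numbers such that: (a) {a_{k,i} : i ∈ I_k} ∈ p_k for each k ∈ ω; (b) I_k ∩ I_{k'} = ∅ whenever k ≠ k'; and (c) the family of closed intervals {[i, a_{k,i}] : k ∈ ω, i ∈ I_k} is pairwise disjoint. -/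
open Cardinal Filter Set Pointwise

noncomputable section

/-- A free (nonprincipal) ultrafilter on ω. -/
def IsFreeUltrafilter (p : Ultrafilter ℕ) : Prop := ∀ n : ℕ, p ≠ pure n

/-- A selective ultrafilter on ω. -/
def IsSelective (p : Ultrafilter ℕ) : Prop :=
  IsFreeUltrafilter p ∧
  ∀ A : ℕ → Set ℕ,
    (∀ k, (A k).Nonempty) → (Pairwise fun k l => Disjoint (A k) (A l)) →
    (⋃ k, A k) = Set.univ →
    (∃ k, A k ∈ p) ∨ ∃ B ∈ p, ∀ k, ∃! n, n ∈ B ∩ A k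

/-- Rudin–Keisler order: `U ≤ V` iff `V = f_*(U)` for some `f`. -/
def RKle (U V : Ultrafilter ℕ) : Prop := ∃ f : ℕ → ℕ, Ultrafilter.map f U = V

/-- Rudin–Keisler incomparability. -/
def RKIncomp (U V : Ultrafilter ℕ) : Prop := ¬ RKle U V ∧ ¬ RKle V U

/-- The index set of order type (the initial ordinal of) `κ`. -/
abbrev Idx (κ : Cardinal) : Type _ := ↥(Set.Iio κ.ord)

/-- The free abelian group `ℤ^(κ)` of finitely supported integer functions on `κ`. -/
abbrev GZ (κ : Cardinal) := Idx κ →₀ ℤ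

/-- The ℚ-vector space `ℚ^(κ)` of finitely supported rational functions on `κ`. -/
abbrev GQ (κ : Cardinal) := Idx κ →₀ ℚ

/-- The canonical embedding `ℤ^(κ) → ℚ^(κ)`. -/
def toQ (κ : Cardinal) (f : GZ κ) : GQ κ :=
  Finsupp.mapRange (Int.cast : ℤ → ℚ) Int.cast_zero f

/-- The characteristic function `χ_ξ`. -/
def chi (κ : Cardinal) (ξ : Idx κ) : GZ κ := Finsupp.single ξ 1

/-- The class `[f]_p` of a sequence `f : ω → ℤ^(κ)` in the ultrapower
`Ult(ℚ, p) = (ℚ^(κ))^ω / p`, realized as a germ. -/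
def cls (κ : Cardinal) (p : Ultrafilter ℕ) (f : ℕ → GZ κ) :
    Filter.Germ (↑p : Filter ℕ) (GQ κ) :=
  (↑(fun n => toQ κ (f n)) : Filter.Germ (↑p : Filter ℕ) (GQ κ))

/-- The class `[χ⃗_ξ]_p` of the constant sequence with value `χ_ξ`. -/
def clsChi (κ : Cardinal) (p : Ultrafilter ℕ) (ξ : Idx κ) :
    Filter.Germ (↑p : Filter ℕ) (GQ κ) :=
  cls κ p (fun _ => chi κ ξ)

/-- `cls` as an additive homomorphism. -/
def clsHom (κ : Cardinal) (p : Ultrafilter ℕ) :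
    (ℕ → GZ κ) →+ Filter.Germ (↑p : Filter ℕ) (GQ κ) :=
  AddMonoidHom.mk' (cls κ p) (by
    intro a b
    unfold cls
    have h : (fun n => toQ κ ((a + b) n)) =
        (fun n => toQ κ (a n)) + (fun n => toQ κ (b n)) := by
      funext n
      simp only [Pi.add_apply, toQ]
      exact Finsupp.mapRange_add (fun x y => by push_cast; ring) _ _
    rw [h, ← Filter.Germ.coe_add])

/-- `Ult(ℤ, p)`: the subgroup of `Ult(ℚ, p)` consisting of classes of
integer-valued sequences. -/
def UltZ (κ : Cardinal) (p : Ultrafilter ℕ) :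
    AddSubgroup (Filter.Germ (↑p : Filter ℕ) (GQ κ)) :=
  (clsHom κ p).range

/-- `ℱ` is linearly independent mod `A*`. -/
def LinIndepMod (κ : Cardinal) (A : Set ℕ) (F : Set (ℕ → GZ κ)) : Prop :=
  ∀ p : Ultrafilter ℕ, IsFreeUltrafilter p → A ∈ p →
    (∀ f ∈ F, ∀ g ∈ F, f ≠ g → cls κ p f ≠ cls κ p g) ∧
    LinearIndependent ℚ
      (Sum.elim (fun f : F => cls κ p ↑f) (fun ξ : Idx κ => clsChi κ p ξ))

/-- `ℰ` is maximal (w.r.t. inclusion) among subsets linearly independent mod `A*`. -/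
def MaximalLinIndepMod (κ : Cardinal) (A : Set ℕ) (E : Set (ℕ → GZ κ)) : Prop :=
  LinIndepMod κ A E ∧ ∀ E' : Set (ℕ → GZ κ), LinIndepMod κ A E' → E ⊆ E' → E' = E

/-- A finite tower in ω: a finite decreasing sequence of infinite subsets of ω. -/
def IsTower (T : List (Set ℕ)) : Prop :=
  (∀ A ∈ T, A.Infinite) ∧
  ∀ i : ℕ, ∀ h : i + 1 < T.length, T.get ⟨i + 1, h⟩ ⊆ T.get ⟨i, Nat.lt_of_succ_lt h⟩

/-- `l(T)`: the last term of a finite tower, with `l(∅) = ω`. -/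
def lastOf (T : List (Set ℕ)) : Set ℕ := T.getLastD Set.univ

/-- `x` is a `p`-limit of the sequence `s`. -/
def IsPLim {X : Type*} [TopologicalSpace X] (p : Ultrafilter ℕ) (s : ℕ → X) (x : X) : Prop :=
  ∀ U ∈ nhds x, {n | s n ∈ U} ∈ p

/-- Countable compactness: every countable open cover has a finite subcover. -/
def CountablyCompactSp (X : Type*) [TopologicalSpace X] : Prop :=
  ∀ 𝒰 : Set (Set X), 𝒰.Countable → (∀ u ∈ 𝒰, IsOpen u) → ⋃₀ 𝒰 = Set.univ →
    ∃ ℱ ⊆ 𝒰, ℱ.Finite ∧ ⋃₀ ℱ = Set.univ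


lemma free_no_finite {p : Ultrafilter ℕ} (hp : IsFreeUltrafilter p) {s : Set ℕ}
    (hs : s.Finite) : s ∉ p := by
  intro hmem
  obtain ⟨x, -, hx⟩ := Ultrafilter.eq_pure_of_finite_mem hs hmem
  exact hp x hx

lemma free_diff_finite_mem {p : Ultrafilter ℕ} (hp : IsFreeUltrafilter p) {s t : Set ℕ}
    (hs : s ∈ p) (ht : t.Finite) : s \ t ∈ p := by
  have : tᶜ ∈ p := (Ultrafilter.compl_mem_iff_notMem).2 (free_no_finite hp ht)
  exact Filter.inter_mem hs this

lemma sel_fiber {p : Ultrafilter ℕ} (hp : IsSelective p) (h : ℕ → ℕ) :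
    (∃ n, h ⁻¹' {n} ∈ p) ∨ ∃ B ∈ p, ∀ x ∈ B, ∀ y ∈ B, h x = h y → x = y := by
  by_cases hinf : {n | (h ⁻¹' {n}).Nonempty}.Infinite
  · set N := fun n => (h ⁻¹' {n}).Nonempty with hN
    have e := Nat.nth N
    have hmem : ∀ j, N (Nat.nth N j) := fun j => Nat.nth_mem_of_infinite hinf j
    have hinj : Function.Injective (Nat.nth N) := Nat.nth_injective hinf
    have hrange : Set.range (Nat.nth N) = setOf N := Nat.range_nth_of_infinite hinf
    set P : ℕ → Set ℕ := fun j => h ⁻¹' {Nat.nth N j} with hP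
    have hcover : (⋃ j, P j) = Set.univ := by
      ext x
      simp only [Set.mem_iUnion, Set.mem_univ, iff_true]
      have : N (h x) := ⟨x, rfl⟩
      have : h x ∈ Set.range (Nat.nth N) := by rw [hrange]; exact this
      obtain ⟨j, hj⟩ := this
      exact ⟨j, by simp [hP, hj]⟩
    have hdisj : Pairwise fun j l => Disjoint (P j) (P l) := by
      intro j l hjl
      apply Set.disjoint_left.2
      intro x hx hx'
      exact hjl (hinj (by simp only [hP, Set.mem_preimage, Set.mem_singleton_iff] at hx hx'; rw [← hx, ← hx']))
    rcases hp.2 P (fun j => hmem j) hdisj hcover with ⟨j, hj⟩ | ⟨B, hB, hBsel⟩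
    · exact Or.inl ⟨Nat.nth N j, hj⟩
    · refine Or.inr ⟨B, hB, fun x hx y hy hxy => ?_⟩
      have hNx : N (h x) := ⟨x, rfl⟩
      have : h x ∈ Set.range (Nat.nth N) := by rw [hrange]; exact hNx
      obtain ⟨j, hj⟩ := this
      obtain ⟨z, -, hzu⟩ := hBsel j
      have h1 : x = z := hzu x ⟨hx, by simp [hP, hj]⟩
      have h2 : y = z := hzu y ⟨hy, by simp [hP, hj, ← hxy]⟩
      rw [h1, h2]
  · left
    rw [Set.not_infinite] at hinf
    by_contra hno
    push_neg at hno
    have hc : ∀ n, (h ⁻¹' {n})ᶜ ∈ p := fun n =>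
      (Ultrafilter.compl_mem_iff_notMem).2 (hno n)
    have : (⋂ n ∈ hinf.toFinset, (h ⁻¹' {n})ᶜ) ∈ p :=
      (Filter.biInter_finset_mem _).2 fun n _ => hc n
    have hempty : (⋂ n ∈ hinf.toFinset, (h ⁻¹' {n})ᶜ) = ∅ := by
      ext x
      simp only [Set.mem_iInter, Set.mem_compl_iff, Set.mem_preimage,
        Set.mem_singleton_iff, Set.mem_empty_iff_false, iff_false, not_forall, not_not]
      exact ⟨h x, by simp [Set.Finite.mem_toFinset]; exact ⟨x, rfl⟩, rfl⟩
    rw [hempty] at this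
    exact (Filter.empty_notMem (p : Filter ℕ)) this

lemma sel_ppoint {p : Ultrafilter ℕ} (hp : IsSelective p) (A : ℕ → Set ℕ)
    (hA : ∀ n, A n ∈ p) : ∃ C, C ∈ p ∧ ∀ n, (C \ A n).Finite := by
  classical
  set h : ℕ → ℕ := fun x => if hx : ∃ n, x ∉ A n then Nat.find hx else 0 with hh
  rcases sel_fiber hp h with ⟨n, hn⟩ | ⟨B, hB, hBi⟩
  · -- fiber in p : then R = ⋂ A n in p
    set R : Set ℕ := {x | ∀ m, x ∈ A m} with hR
    have hsub : h ⁻¹' {n} ⊆ R ∪ (A n)ᶜ := by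
      intro x hx
      simp only [Set.mem_preimage, Set.mem_singleton_iff] at hx
      by_cases hxa : ∃ m, x ∉ A m
      · right
        have : h x = Nat.find hxa := by simp [hh, hxa]
        have := Nat.find_spec hxa
        rw [hx] at *
        simpa [← ‹(n : ℕ) = Nat.find hxa›] using this
      · left; intro m; by_contra hc; exact hxa ⟨m, hc⟩
    have hun : R ∪ (A n)ᶜ ∈ p := Filter.mem_of_superset hn hsub
    have : R ∈ p ∨ (A n)ᶜ ∈ p := (Ultrafilter.union_mem_iff).1 hun
    have hRp : R ∈ p := by
      rcases this with h1 | h2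
      · exact h1
      · exact absurd (hA n) ((Ultrafilter.compl_mem_iff_notMem).1 h2)
    refine ⟨R, hRp, fun n => ?_⟩
    have : R \ A n = ∅ := by
      ext x; simp only [Set.mem_diff, Set.mem_empty_iff_false, iff_false, not_and, not_not]
      intro hx; exact hx n
    simp [this]
  · refine ⟨B, hB, fun n => ?_⟩
    have hsub : B \ A n ⊆ ⋃ m ∈ Finset.range (n + 1), {x ∈ B | h x = m} := by
      intro x ⟨hxB, hxA⟩
      have hex : ∃ m, x ∉ A m := ⟨n, hxA⟩
      have hhx : h x = Nat.find hex := by simp [hh, hex]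
      have hle : Nat.find hex ≤ n := Nat.find_le hxA
      exact Set.mem_biUnion (Finset.mem_range.2 (Nat.lt_succ_of_le hle))
        (⟨hxB, hhx⟩ : x ∈ {x ∈ B | h x = Nat.find hex})
    refine Set.Finite.subset (Set.Finite.biUnion (Finset.range (n+1)).finite_toSet
      (fun m _ => ?_)) hsub
    apply Set.Subsingleton.finite
    intro x hx y hy
    exact hBi x hx.1 y hy.1 (hx.2.trans hy.2.symm)


/-- blocks boundaries -/
private def bnd (F : ℕ → ℕ) : ℕ → ℕ
  | 0 => 0
  | j + 1 => bnd F j + F (bnd F j) + 1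

lemma sel_sep {p : Ultrafilter ℕ} (hp : IsSelective p) {A : Set ℕ} (hA : A ∈ p)
    (f : ℕ → ℕ) :
    ∃ S, S ∈ p ∧ S ⊆ A ∧ ∀ s ∈ S, ∀ t ∈ S, s < t → f s < t := by
  classical
  set F : ℕ → ℕ := fun x => (Finset.range (x + 1)).sup f with hF
  have hFle : ∀ s x, s ≤ x → f s ≤ F x := fun s x hsx =>
    Finset.le_sup (Finset.mem_range.2 (Nat.lt_succ_of_le hsx))
  set n : ℕ → ℕ := bnd F with hn
  have hnsucc : ∀ j, n (j + 1) = n j + F (n j) + 1 := fun j => rfl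
  have hnlt : ∀ j, n j < n (j + 1) := fun j => by rw [hnsucc]; omega
  have hnmono : StrictMono n := strictMono_nat_of_lt_succ hnlt
  have hnge : ∀ j, j ≤ n j := fun j => by
    induction j with
    | zero => exact Nat.zero_le _
    | succ k ih => have := hnlt k; omega
  set P : ℕ → Set ℕ := fun j => Set.Ico (n j) (n (j + 1)) with hP
  -- every x lies in a unique block
  have hblock : ∀ x, ∃ j, x ∈ P j := by
    intro x
    have hex : ∃ j, x < n j := ⟨x + 1, Nat.lt_of_lt_of_le (Nat.lt_succ_self x) (hnge (x+1))⟩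
    have hjpos : 0 < Nat.find hex := by
      rcases Nat.eq_zero_or_pos (Nat.find hex) with h0 | h
      · have := Nat.find_spec hex
        rw [h0] at this
        simp [hn, bnd] at this
      · exact h
    refine ⟨Nat.find hex - 1, ?_, ?_⟩
    · have := Nat.find_min hex (show Nat.find hex - 1 < Nat.find hex by omega)
      omega
    · have := Nat.find_spec hex
      rw [show Nat.find hex - 1 + 1 = Nat.find hex by omega]
      exact this
  have hdisj : Pairwise fun j l => Disjoint (P j) (P l) := by
    intro j l hjl
    apply Set.disjoint_left.2
    rintro x ⟨hx1, hx2⟩ ⟨hy1, hy2⟩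
    rcases Nat.lt_or_ge j l with h | h
    · have : n (j + 1) ≤ n l := hnmono.monotone h
      omega
    · have hlj : l < j := lt_of_le_of_ne h hjl.symm
      have : n (l + 1) ≤ n j := hnmono.monotone hlj
      omega
  rcases hp.2 P (fun j => ⟨n j, le_refl _, hnlt j⟩) hdisj
      (by ext x; simpa using hblock x) with ⟨j, hj⟩ | ⟨B, hB, hBsel⟩
  · exact absurd hj (free_no_finite hp.1 (Set.finite_Ico _ _))
  · -- even/odd
    set E : Set ℕ := ⋃ u, P (2 * u) with hE
    -- key step : points of B in blocks j, k with k ≥ j + 2 satisfy f s < t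
    have hkey : ∀ s t js jt, s ∈ P js → t ∈ P jt → js + 2 ≤ jt → f s < t := by
      intro s t js jt hs ht hjj
      have h1 : f s ≤ F (n (js + 1)) := hFle s _ (le_of_lt (lt_of_lt_of_le hs.2 (le_refl _)))
      have h2 : F (n (js + 1)) < n (js + 2) := by rw [hnsucc (js+1)]; omega
      have h3 : n (js + 2) ≤ n jt := hnmono.monotone hjj
      exact lt_of_le_of_lt h1 (lt_of_lt_of_le h2 (le_trans h3 ht.1))
    have hsame : ∀ s t j, s ∈ B → t ∈ B → s ∈ P j → t ∈ P j → s = t := by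
      intro s t j hsB htB hsP htP
      obtain ⟨z, -, hzu⟩ := hBsel j
      rw [hzu s ⟨hsB, hsP⟩, hzu t ⟨htB, htP⟩]
    have hord : ∀ s t js jt, s < t → s ∈ P js → t ∈ P jt → js ≤ jt := by
      intro s t js jt hst hs ht
      by_contra hc
      push_neg at hc
      have h2 : n (jt + 1) ≤ n js := hnmono.monotone hc
      obtain ⟨hs1, hs2⟩ := hs
      obtain ⟨ht1, ht2⟩ := ht
      omega
    rcases (p : Ultrafilter ℕ).mem_or_compl_mem E with hEp | hEc
    · refine ⟨A ∩ B ∩ E, Filter.inter_mem (Filter.inter_mem hA hB) hEp,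
        fun x hx => hx.1.1, ?_⟩
      rintro s ⟨⟨hsA, hsB⟩, hsE⟩ t ⟨⟨htA, htB⟩, htE⟩ hst
      obtain ⟨us, hus⟩ := Set.mem_iUnion.1 hsE
      obtain ⟨ut, hut⟩ := Set.mem_iUnion.1 htE
      have hle : 2 * us ≤ 2 * ut := hord s t _ _ hst hus hut
      have hne : us ≠ ut := by
        intro h
        subst h
        exact absurd (hsame s t _ hsB htB hus hut) (ne_of_lt hst)
      exact hkey s t _ _ hus hut (by omega)
    · -- complement : odd blocks
      refine ⟨A ∩ B ∩ Eᶜ, Filter.inter_mem (Filter.inter_mem hA hB) hEc,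
        fun x hx => hx.1.1, ?_⟩
      rintro s ⟨⟨hsA, hsB⟩, hsE⟩ t ⟨⟨htA, htB⟩, htE⟩ hst
      obtain ⟨js, hjs⟩ := hblock s
      obtain ⟨jt, hjt⟩ := hblock t
      have hos : ¬ Even js := by
        rintro ⟨u, hu⟩
        exact hsE (Set.mem_iUnion.2 ⟨u, by rw [show 2*u = js by omega]; exact hjs⟩)
      have hot : ¬ Even jt := by
        rintro ⟨u, hu⟩
        exact htE (Set.mem_iUnion.2 ⟨u, by rw [show 2*u = jt by omega]; exact hjt⟩)
      have hle : js ≤ jt := hord s t _ _ hst hjs hjt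
      have hne : js ≠ jt := by
        intro h
        subst h
        exact absurd (hsame s t _ hsB htB hjs hjt) (ne_of_lt hst)
      have : js + 2 ≤ jt := by
        rcases Nat.even_or_odd js with h | h
        · exact absurd h hos
        rcases Nat.even_or_odd jt with h' | h'
        · exact absurd h' hot
        obtain ⟨u, hu⟩ := h; obtain ⟨v, hv⟩ := h'
        omega
      exact hkey s t _ _ hjs hjt this


/-- From `map f p ≠ q`, extract `W ∈ q` with `f ⁻¹' W ∉ p`. -/
lemma exists_wit {p q : Ultrafilter ℕ} (f : ℕ → ℕ) (h : Ultrafilter.map f p ≠ q) :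
    ∃ W, W ∈ q ∧ f ⁻¹' W ∉ p := by
  have : ¬ (Ultrafilter.map f p : Filter ℕ) ≤ (q : Filter ℕ) := by
    intro hle
    exact h (Ultrafilter.coe_le_coe.1 hle)
  rw [Filter.le_def] at this
  push_neg at this
  obtain ⟨W, hWq, hWm⟩ := this
  refine ⟨W, hWq, fun hc => hWm ?_⟩
  rw [Ultrafilter.mem_coe, Ultrafilter.mem_map]
  exact hc

lemma pair_sep {p q : Ultrafilter ℕ} (hp : IsSelective p) (hq : IsSelective q)
    (hpq : ∀ f : ℕ → ℕ, Ultrafilter.map f p ≠ q)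
    {a b : ℕ → ℕ} (ha : StrictMono a) (hb : StrictMono b)
    (hAp : Set.range a ∈ p) (hBq : Set.range b ∈ q)
    (hla : ∀ i, i < a i) (hlb : ∀ i, i < b i) :
    ∃ S T, S ∈ p ∧ T ∈ q ∧ S ⊆ Set.range a ∧ T ⊆ Set.range b ∧
      ∀ s ∈ S, ∀ t ∈ T,
        Set.Icc (Function.invFun a s) s ∩ Set.Icc (Function.invFun b t) t = ∅ := by
  classical
  set ma := Function.invFun a with hma
  set mb := Function.invFun b with hmb
  have hmaa : ∀ i, ma (a i) = i := fun i => Function.leftInverse_invFun ha.injective i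
  have hmbb : ∀ i, mb (b i) = i := fun i => Function.leftInverse_invFun hb.injective i
  have hams : ∀ s, s ∈ Set.range a → a (ma s) = s := by
    rintro s ⟨i, rfl⟩; rw [hmaa]
  have hbms : ∀ t, t ∈ Set.range b → b (mb t) = t := by
    rintro t ⟨i, rfl⟩; rw [hmbb]
  -- transfer : for s ∈ range a, ma s ≤ x ↔ s ≤ a x
  have htrans : ∀ s x, s ∈ Set.range a → ma s ≤ x → s ≤ a x := by
    intro s x hs h
    calc s = a (ma s) := (hams s hs).symm
    _ ≤ a x := ha.monotone h
  have htransb : ∀ t x, t ∈ Set.range b → b x < t → x < mb t := by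
    intro t x ht h
    by_contra hc
    push_neg at hc
    exact absurd (le_trans ((hbms t ht).symm.le) (hb.monotone hc)) (not_le.2 h)
  obtain ⟨S₀, hS₀p, hS₀sub, hS₀sep⟩ := sel_sep hp hAp (fun x => a (x + 1))
  obtain ⟨T₀, hT₀q, hT₀sub, hT₀sep⟩ := sel_sep hq hBq (fun x => max (b (x + 1)) (a x))
  -- basic structure of T₀
  have hTb : ∀ t t', t ∈ T₀ → t' ∈ T₀ → t < t' → t < mb t' ∧ a t < t' := by
    intro t t' ht ht' hlt
    have := hT₀sep t ht t' ht' hlt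
    have hbt : b t < t' :=
      lt_of_le_of_lt (le_trans (hb.monotone (Nat.le_succ t)) (le_max_left _ _)) this
    exact ⟨htransb t' t (hT₀sub ht') hbt, lt_of_le_of_lt (le_max_right _ _) this⟩
  -- endpoints : mb t < t for t ∈ T₀, ma s < s for s ∈ range a
  have hmalt : ∀ s, s ∈ Set.range a → ma s < s := by
    rintro s ⟨i, rfl⟩; rw [hmaa]; exact hla i
  have hmblt : ∀ t, t ∈ T₀ → mb t < t := by
    intro t ht
    obtain ⟨i, rfl⟩ := hT₀sub ht
    rw [hmbb]; exact hlb i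
  -- uniqueness lemmas
  have huPt : ∀ x t t', t ∈ T₀ → t' ∈ T₀ → mb t ≤ x → x ≤ t → mb t' ≤ x → x ≤ t' → t = t' := by
    intro x t t' ht ht' h1 h2 h3 h4
    rcases lt_trichotomy t t' with h | h | h
    · exact absurd ((hTb t t' ht ht' h).1) (by omega)
    · exact h
    · exact absurd ((hTb t' t ht' ht h).1) (by omega)
  have huJa : ∀ s t t', s ∈ Set.range a → t ∈ T₀ → t' ∈ T₀ →
      ma s ≤ t → t ≤ s → ma s ≤ t' → t' ≤ s → t = t' := by
    intro s t t' hs ht ht' h1 h2 h3 h4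
    rcases lt_trichotomy t t' with h | h | h
    · have h5 := (hTb t t' ht ht' h).2
      have h6 : s ≤ a t := htrans s t hs h1
      omega
    · exact h
    · have h5 := (hTb t' t ht' ht h).2
      have h6 : s ≤ a t' := htrans s t' hs h3
      omega
  -- the three trace functions
  set P₁ : ℕ → ℕ → Prop := fun s t => t ∈ T₀ ∧ mb t ≤ s ∧ s ≤ t with hP₁
  set P₂ : ℕ → ℕ → Prop := fun s t => t ∈ T₀ ∧ mb t ≤ ma s ∧ ma s ≤ t with hP₂
  set P₃ : ℕ → ℕ → Prop := fun s t => t ∈ T₀ ∧ ma s ≤ t ∧ t ≤ s with hP₃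
  set f₁ : ℕ → ℕ := fun s => if h : ∃ t, P₁ s t then h.choose else 0 with hf₁
  set f₂ : ℕ → ℕ := fun s => if h : ∃ t, P₂ s t then h.choose else 0 with hf₂
  set f₃ : ℕ → ℕ := fun s => if h : ∃ t, P₃ s t then h.choose else 0 with hf₃
  obtain ⟨W₁, hW₁q, hW₁p⟩ := exists_wit f₁ (hpq f₁)
  obtain ⟨W₂, hW₂q, hW₂p⟩ := exists_wit f₂ (hpq f₂)
  obtain ⟨W₃, hW₃q, hW₃p⟩ := exists_wit f₃ (hpq f₃)
  refine ⟨S₀ ∩ ((f₁ ⁻¹' W₁)ᶜ ∩ (f₂ ⁻¹' W₂)ᶜ ∩ (f₃ ⁻¹' W₃)ᶜ),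
    T₀ ∩ (W₁ ∩ W₂ ∩ W₃), ?_, ?_, fun x hx => hS₀sub hx.1, fun x hx => hT₀sub hx.1, ?_⟩
  · exact Filter.inter_mem hS₀p (Filter.inter_mem (Filter.inter_mem
      ((Ultrafilter.compl_mem_iff_notMem).2 hW₁p)
      ((Ultrafilter.compl_mem_iff_notMem).2 hW₂p))
      ((Ultrafilter.compl_mem_iff_notMem).2 hW₃p))
  · exact Filter.inter_mem hT₀q (Filter.inter_mem (Filter.inter_mem hW₁q hW₂q) hW₃q)
  · rintro s ⟨hsS, ⟨⟨hs1, hs2⟩, hs3⟩⟩ t ⟨htT, ⟨⟨ht1, ht2⟩, ht3⟩⟩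
    by_contra hne
    obtain ⟨x, ⟨hx1, hx2⟩, hx3, hx4⟩ := Set.nonempty_iff_ne_empty.2 hne
    have hsr : s ∈ Set.range a := hS₀sub hsS
    -- case analysis
    rcases le_or_gt s t with hst | hts
    · -- P₁ holds
      have hp1 : P₁ s t := ⟨htT, le_trans hx3 hx2, hst⟩
      have hex : ∃ t', P₁ s t' := ⟨t, hp1⟩
      have : f₁ s = t := by
        rw [hf₁]
        simp only [dif_pos hex]
        obtain ⟨ht', h1', h2'⟩ := hex.choose_spec
        exact huPt s _ t ht' htT h1' h2' hp1.2.1 hp1.2.2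
      exact hs1 (by rw [Set.mem_preimage, this]; exact ht1)
    · rcases le_or_gt (mb t) (ma s) with hmm | hmm
      · -- P₂ holds
        have hp2 : P₂ s t := ⟨htT, hmm, le_trans hx1 hx4⟩
        have hex : ∃ t', P₂ s t' := ⟨t, hp2⟩
        have : f₂ s = t := by
          rw [hf₂]
          simp only [dif_pos hex]
          obtain ⟨ht', h1', h2'⟩ := hex.choose_spec
          exact huPt (ma s) _ t ht' htT h1' h2' hp2.2.1 hp2.2.2
        exact hs2 (by rw [Set.mem_preimage, this]; exact ht2)
      · -- P₃ holds
        have hp3 : P₃ s t := ⟨htT, le_trans (le_of_lt hmm) (le_of_lt (hmblt t htT)), le_of_lt hts⟩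
        have hex : ∃ t', P₃ s t' := ⟨t, hp3⟩
        have : f₃ s = t := by
          rw [hf₃]
          simp only [dif_pos hex]
          obtain ⟨ht', h1', h2'⟩ := hex.choose_spec
          exact huJa s _ t hsr ht' htT h1' h2' hp3.2.1 hp3.2.2
        exact hs3 (by rw [Set.mem_preimage, this]; exact ht3)


/-- The recursive disjointification. -/
def buildG (a : ℕ → ℕ → ℕ) (C : ℕ → Set ℕ) (X Y : ℕ → ℕ → Set ℕ) : ℕ → Set ℕ
  | k => (C k ∩ ⋂ l ∈ Finset.range k, Y l k) \
      {c | ∃ l, ∃ _ : l < k, ∃ t ∈ buildG a C X Y l \ X l k,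
        (Set.Icc (Function.invFun (a k) c) c ∩
          Set.Icc (Function.invFun (a l) t) t).Nonempty}
  termination_by k => k
  decreasing_by exact ‹_ < k›


theorem statement3 (p : ℕ → Ultrafilter ℕ) (hsel : ∀ k, IsSelective (p k))
    (hinc : ∀ k l, k ≠ l → RKIncomp (p k) (p l))
    (a : ℕ → ℕ → ℕ) (hmono : ∀ k, StrictMono (a k))
    (hmem : ∀ k, (a k '' Set.univ) ∈ p k)
    (hlt : ∀ k i, i < a k i) :
    ∃ I : ℕ → Set ℕ,
      (∀ k, (a k '' I k) ∈ p k) ∧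
      (∀ k l, k ≠ l → I k ∩ I l = ∅) ∧
      (∀ k i k' i', i ∈ I k → i' ∈ I k' → (k, i) ≠ (k', i') →
        Set.Icc i (a k i) ∩ Set.Icc i' (a k' i') = ∅) := by
  classical
  have hfree : ∀ k, IsFreeUltrafilter (p k) := fun k => (hsel k).1
  have hrange : ∀ k, Set.range (a k) ∈ p k := fun k => by
    have := hmem k; rwa [Set.image_univ] at this
  have hminv : ∀ k i, Function.invFun (a k) (a k i) = i :=
    fun k i => Function.leftInverse_invFun (hmono k).injective i
  have hmup : ∀ k c c', c' ∈ Set.range (a k) → a k c < c' → c < Function.invFun (a k) c' := by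
    rintro k c c' ⟨i, rfl⟩ h
    rw [hminv]
    exact (hmono k).lt_iff_lt.1 h
  -- baseline sets with separated intervals
  have hDex : ∀ k, ∃ D, D ∈ p k ∧ D ⊆ Set.range (a k) ∧
      ∀ s ∈ D, ∀ t ∈ D, s < t → a k (s + 1) < t :=
    fun k => sel_sep (hsel k) (hrange k) (fun x => a k (x + 1))
  choose D hDp hDsub hDsep using hDex
  -- pairwise separation
  have hpairex : ∀ k l, ∃ S T, S ∈ p k ∧ T ∈ p l ∧ (k ≠ l →
      ∀ s ∈ S, ∀ t ∈ T,
        Set.Icc (Function.invFun (a k) s) s ∩ Set.Icc (Function.invFun (a l) t) t = ∅) := by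
    intro k l
    by_cases hkl : k ≠ l
    · have hpq : ∀ f : ℕ → ℕ, Ultrafilter.map f (p k) ≠ p l := by
        have := (hinc k l hkl).1
        rw [RKle] at this
        push_neg at this
        exact this
      obtain ⟨S, T, hS, hT, -, -, hd⟩ := pair_sep (hsel k) (hsel l) hpq (hmono k) (hmono l)
        (hrange k) (hrange l) (hlt k) (hlt l)
      exact ⟨S, T, hS, hT, fun _ => hd⟩
    · exact ⟨Set.univ, Set.univ, univ_mem, univ_mem, fun h => absurd h hkl⟩
  choose X Y hX hY hXY using hpairex
  -- P-point pseudointersections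
  have hCex : ∀ k, ∃ C, C ∈ p k ∧ C ⊆ D k ∧
      (∀ l, (C \ X k l).Finite) ∧ (∀ l, (C \ Y l k).Finite) := by
    intro k
    set fam : ℕ → Set ℕ := fun n => if Even n then X k (n / 2) else Y (n / 2) k with hfam
    have hfamp : ∀ n, fam n ∈ p k := by
      intro n
      rw [hfam]
      by_cases h : Even n
      · simp only [if_pos h]; exact hX k (n / 2)
      · simp only [if_neg h]; exact hY (n / 2) k
    obtain ⟨C₀, hC₀p, hC₀f⟩ := sel_ppoint (hsel k) fam hfamp
    refine ⟨C₀ ∩ D k, Filter.inter_mem hC₀p (hDp k), Set.inter_subset_right, ?_, ?_⟩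
    · intro l
      refine Set.Finite.subset (hC₀f (2 * l)) ?_
      intro x ⟨hx1, hx2⟩
      refine ⟨hx1.1, ?_⟩
      have : fam (2 * l) = X k l := by
        rw [hfam]; simp [Nat.mul_div_cancel_left l (by norm_num : 0 < 2)]
      rw [this]; exact hx2
    · intro l
      refine Set.Finite.subset (hC₀f (2 * l + 1)) ?_
      intro x ⟨hx1, hx2⟩
      refine ⟨hx1.1, ?_⟩
      have : fam (2 * l + 1) = Y l k := by
        rw [hfam]
        have : ¬ Even (2 * l + 1) := by simp [Nat.even_add_one, Nat.even_mul]
        simp only [if_neg this]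
        have h2 : (2 * l + 1) / 2 = l := by omega
        rw [h2]
      rw [this]; exact hx2
  choose C hCp hCD hCX hCY using hCex
  set G : ℕ → Set ℕ := buildG a C X Y with hG
  have hGdef : ∀ k, G k = (C k ∩ ⋂ l ∈ Finset.range k, Y l k) \
      {c | ∃ l, ∃ _ : l < k, ∃ t ∈ G l \ X l k,
        (Set.Icc (Function.invFun (a k) c) c ∩
          Set.Icc (Function.invFun (a l) t) t).Nonempty} := by
    intro k
    rw [hG]
    rw [buildG]
  have hGsubC : ∀ k, G k ⊆ C k := by
    intro k
    rw [hGdef k]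
    exact (Set.diff_subset).trans Set.inter_subset_left
  have hGrange : ∀ k, G k ⊆ Set.range (a k) :=
    fun k => (hGsubC k).trans ((hCD k).trans (hDsub k))
  -- membership
  have hGmem : ∀ k, G k ∈ p k := by
    intro k
    set big := C k ∩ ⋂ l ∈ Finset.range k, Y l k with hbig
    have hbigp : big ∈ p k :=
      Filter.inter_mem (hCp k) ((Filter.biInter_finset_mem _).2 fun l _ => hY l k)
    set junk := {c | ∃ l, ∃ _ : l < k, ∃ t ∈ G l \ X l k,
        (Set.Icc (Function.invFun (a k) c) c ∩
          Set.Icc (Function.invFun (a l) t) t).Nonempty} with hjunk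
    have hfin : (big ∩ junk).Finite := by
      have hsub : big ∩ junk ⊆ ⋃ l ∈ Finset.range k,
          {c | c ∈ C k ∧ ∃ t ∈ G l \ X l k,
            (Set.Icc (Function.invFun (a k) c) c ∩
              Set.Icc (Function.invFun (a l) t) t).Nonempty} := by
        rintro c ⟨hcb, l, hlk, t, ht, hint⟩
        exact Set.mem_biUnion (Finset.mem_range.2 hlk) ⟨hcb.1, t, ht, hint⟩
      refine Set.Finite.subset (Set.Finite.biUnion (Finset.range k).finite_toSet
        (fun l _ => ?_)) hsub
      have hfinl : (G l \ X l k).Finite :=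
        Set.Finite.subset (hCX l k |> fun h => h) (by
          intro x ⟨hx1, hx2⟩
          exact ⟨hGsubC l hx1, hx2⟩)
      obtain ⟨N, hN⟩ := hfinl.bddAbove
      refine Set.Finite.subset (Set.finite_Iic (a k N)) ?_
      rintro c ⟨hcC, t, ht, x, ⟨hx1, hx2⟩, ⟨hx3, hx4⟩⟩
      have htN : t ≤ N := hN ht
      have hmN : Function.invFun (a k) c ≤ N := le_trans (le_trans hx1 hx4) htN
      -- c ∈ range a k
      obtain ⟨i, rfl⟩ := (hCD k).trans (hDsub k) hcC
      rw [hminv] at hmN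
      exact Set.mem_Iic.2 ((hmono k).monotone hmN)
    rw [hGdef k]
    refine Filter.mem_of_superset (free_diff_finite_mem (hfree k) hbigp hfin) ?_
    rintro x ⟨hx1, hx2⟩
    exact ⟨hx1, fun hj => hx2 ⟨hx1, hj⟩⟩
  -- cross disjointness for l < k
  have hGcross : ∀ l k, l < k → ∀ t ∈ G l, ∀ c ∈ G k,
      Set.Icc (Function.invFun (a l) t) t ∩ Set.Icc (Function.invFun (a k) c) c = ∅ := by
    intro l k hlk t htG c hcG
    rw [hGdef k] at hcG
    obtain ⟨⟨hcC, hcY⟩, hcJ⟩ := hcG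
    by_cases htX : t ∈ X l k
    · have hcYlk : c ∈ Y l k := by
        have := Set.mem_iInter₂.1 hcY l (Finset.mem_range.2 hlk)
        exact this
      exact hXY l k (Nat.ne_of_lt hlk) t htX c hcYlk
    · rw [Set.eq_empty_iff_forall_notMem]
      rintro x ⟨hx1, hx2⟩
      exact hcJ ⟨l, hlk, t, ⟨htG, htX⟩, ⟨x, hx2, hx1⟩⟩
  -- within-k disjointness
  have hGwithin : ∀ k, ∀ c ∈ G k, ∀ c' ∈ G k, c ≠ c' →
      Set.Icc (Function.invFun (a k) c) c ∩ Set.Icc (Function.invFun (a k) c') c' = ∅ := by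
    have key : ∀ k, ∀ c ∈ G k, ∀ c' ∈ G k, c < c' →
        Set.Icc (Function.invFun (a k) c) c ∩ Set.Icc (Function.invFun (a k) c') c' = ∅ := by
      intro k c hc c' hc' hlt'
      have hcD : c ∈ D k := hCD k (hGsubC k hc)
      have hcD' : c' ∈ D k := hCD k (hGsubC k hc')
      have hsep := hDsep k c hcD c' hcD' hlt'
      have h1 : c < Function.invFun (a k) c' := by
        have := hmup k (c + 1) c' (hDsub k hcD') hsep
        omega
      rw [Set.eq_empty_iff_forall_notMem]
      rintro x ⟨⟨-, hx2⟩, ⟨hx3, -⟩⟩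
      omega
    intro k c hc c' hc' hne
    rcases lt_or_gt_of_ne hne with h | h
    · exact key k c hc c' hc' h
    · rw [Set.inter_comm]; exact key k c' hc' c hc h
  refine ⟨fun k => a k ⁻¹' G k, ?_, ?_, ?_⟩
  · intro k
    have : a k '' (a k ⁻¹' G k) = G k := by
      rw [Set.image_preimage_eq_inter_range, Set.inter_eq_self_of_subset_left (hGrange k)]
    rw [this]
    exact hGmem k
  · -- (b) from (c) logic, prove directly
    intro k l hkl
    rw [Set.eq_empty_iff_forall_notMem]
    rintro i ⟨hik, hil⟩
    have hik' : a k i ∈ G k := hik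
    have hil' : a l i ∈ G l := hil
    have : Set.Icc (Function.invFun (a k) (a k i)) (a k i) ∩
        Set.Icc (Function.invFun (a l) (a l i)) (a l i) = ∅ := by
      rcases lt_or_gt_of_ne hkl with h | h
      · exact hGcross k l h _ hik' _ hil'
      · rw [Set.inter_comm]; exact hGcross l k h _ hil' _ hik'
    rw [hminv, hminv] at this
    have : i ∈ (∅ : Set ℕ) := by
      rw [← this]
      exact ⟨⟨le_refl i, (hlt k i).le⟩, ⟨le_refl i, (hlt l i).le⟩⟩
    exact absurd this (Set.notMem_empty i)
  · intro k i k' i' hi hi' hne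
    have hik : a k i ∈ G k := hi
    have hik' : a k' i' ∈ G k' := hi'
    have goal : Set.Icc (Function.invFun (a k) (a k i)) (a k i) ∩
        Set.Icc (Function.invFun (a k') (a k' i')) (a k' i') = ∅ := by
      rcases lt_trichotomy k k' with h | h | h
      · exact hGcross k k' h _ hik _ hik'
      · subst h
        have hii : i ≠ i' := by
          intro hii; exact hne (by rw [hii])
        have hcc : a k i ≠ a k i' := fun hcc => hii ((hmono k).injective hcc)
        exact hGwithin k _ hik _ hik' hcc
      · rw [Set.inter_comm]; exact hGcross k' k h _ hik' _ hik
    rwa [hminv, hminv] at goal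


end
end

section
/- Assume there exist 𝔠 pairwise Rudin–Keisler incomparable selective ultrafilters on ω. Then there exists a family (p_{T,n} : T ∈ 𝒯, n ∈ ω) of pairwise Rudin–Keisler incomparable selective ultrafilters such that l(T) ∈ p_{T,n} for every T ∈ 𝒯 and n ∈ ω. -/
open Cardinal Filter Set Pointwise

noncomputable section

lemma free_map {h : ℕ → ℕ} (hinj : Function.Injective h) {p : Ultrafilter ℕ}
    (hp : IsFreeUltrafilter p) : IsFreeUltrafilter (Ultrafilter.map h p) := by
  intro n hn
  have h1 : ({n} : Set ℕ) ∈ Ultrafilter.map h p := by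
    rw [hn]; exact Ultrafilter.mem_pure.mpr rfl
  rw [Ultrafilter.mem_map] at h1
  have hfin : (h ⁻¹' {n}).Finite := by
    apply Set.Subsingleton.finite
    intro a ha b hb
    exact hinj (ha.trans hb.symm)
  obtain ⟨a, _, ha⟩ := Ultrafilter.eq_pure_of_finite_mem hfin h1
  exact hp a ha

lemma selective_subsingleton {p : Ultrafilter ℕ} (hp : IsSelective p)
    (B : ℕ → Set ℕ) (hdisj : Pairwise fun k l => Disjoint (B k) (B l))
    (hcov : (⋃ k, B k) = Set.univ) :
    (∃ k, B k ∈ p) ∨ ∃ C ∈ p, ∀ k, (C ∩ B k).Subsingleton := by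
  classical
  by_cases hK : {k | (B k).Nonempty}.Finite
  · left
    have hmem : (⋃ k ∈ {k | (B k).Nonempty}, B k) ∈ p := by
      have : (⋃ k ∈ {k | (B k).Nonempty}, B k) = ⋃ k, B k := by
        apply Set.Subset.antisymm
        · exact Set.iUnion₂_subset fun k _ => Set.subset_iUnion B k
        · intro x hx
          obtain ⟨k, hk⟩ := Set.mem_iUnion.mp hx
          exact Set.mem_biUnion ⟨x, hk⟩ hk
      rw [this, hcov]
      exact Filter.univ_mem
    obtain ⟨k, _, hk⟩ := (Ultrafilter.finite_biUnion_mem_iff hK).mp hmem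
    exact ⟨k, hk⟩
  · set K := {k | (B k).Nonempty} with hKdef
    haveI : DecidablePred fun x => x ∈ K := Classical.decPred _
    haveI : Infinite K := Set.Infinite.to_subtype hK
    let e : ℕ ≃ K := (@Denumerable.eqv K (@Nat.Subtype.denumerable K (Classical.decPred _) (Set.Infinite.to_subtype hK))).symm
    have hcov' : (⋃ j, B (e j : ℕ)) = Set.univ := by
      apply Set.eq_univ_of_forall
      intro x
      obtain ⟨k, hk⟩ := Set.mem_iUnion.mp (hcov ▸ Set.mem_univ x)
      have hkK : k ∈ K := ⟨x, hk⟩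
      refine Set.mem_iUnion.mpr ⟨e.symm ⟨k, hkK⟩, ?_⟩
      simpa using hk
    have hne' : ∀ j, (B (e j : ℕ)).Nonempty := fun j => (e j).2
    have hdisj' : Pairwise fun j l => Disjoint (B (e j : ℕ)) (B (e l : ℕ)) := by
      intro j l hjl
      apply hdisj
      intro hEq
      exact hjl (e.injective (Subtype.ext hEq))
    rcases hp.2 _ hne' hdisj' hcov' with ⟨j, hj⟩ | ⟨C, hC, hsel⟩
    · exact Or.inl ⟨e j, hj⟩
    · right
      refine ⟨C, hC, fun k => ?_⟩
      by_cases hkK : k ∈ K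
      · obtain ⟨n, _, hn⟩ := hsel (e.symm ⟨k, hkK⟩)
        intro a ha b hb
        have hk' : ((e (e.symm ⟨k, hkK⟩)) : ℕ) = k := by simp
        rw [hn a (by rwa [hk']), hn b (by rwa [hk'])]
      · have : B k = ∅ := Set.not_nonempty_iff_eq_empty.mp hkK
        rw [this]
        simp [Set.Subsingleton]

lemma selective_map {h : ℕ → ℕ} (hinj : Function.Injective h) {p : Ultrafilter ℕ}
    (hp : IsSelective p) : IsSelective (Ultrafilter.map h p) := by
  classical
  refine ⟨free_map hinj hp.1, ?_⟩
  intro A hne hdisj hcov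
  have key : ∀ {k l x}, x ∈ A k → x ∈ A l → k = l := by
    intro k l x hk hl
    by_contra hkl
    exact (hdisj hkl).le_bot ⟨hk, hl⟩ |>.elim
  have hBdisj : Pairwise fun k l => Disjoint (h ⁻¹' A k) (h ⁻¹' A l) := by
    intro k l hkl
    exact Set.disjoint_left.mpr fun a ha hb => hkl (key ha hb)
  have hBcov : (⋃ k, h ⁻¹' A k) = Set.univ := by
    rw [← Set.preimage_iUnion, hcov, Set.preimage_univ]
  rcases selective_subsingleton hp _ hBdisj hBcov with ⟨k, hk⟩ | ⟨C, hC, hsub⟩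
  · exact Or.inl ⟨k, Ultrafilter.mem_map.mpr hk⟩
  · right
    let c : ℕ → ℕ := fun k => (hne k).choose
    have hc : ∀ k, c k ∈ A k := fun k => (hne k).choose_spec
    let D := {k | (h '' C ∩ A k) = ∅}
    refine ⟨h '' C ∪ c '' D, ?_, ?_⟩
    · rw [Ultrafilter.mem_map]
      exact Filter.mem_of_superset hC fun x hx =>
        Set.mem_union_left _ (Set.mem_image_of_mem h hx)
    · intro k
      by_cases hk : k ∈ D
      · refine ⟨c k, ⟨Or.inr ⟨k, hk, rfl⟩, hc k⟩, ?_⟩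
        rintro y ⟨hy1 | hy2, hyk⟩
        · exact absurd (Set.eq_empty_iff_forall_notMem.mp hk y ⟨hy1, hyk⟩) (fun h => h)
        · obtain ⟨l, hl, rfl⟩ := hy2
          rw [key (hc l) hyk]
      · obtain ⟨x₀, hx₀⟩ := Set.nonempty_iff_ne_empty.mpr hk
        refine ⟨x₀, ⟨Or.inl hx₀.1, hx₀.2⟩, ?_⟩
        rintro y ⟨hy1 | hy2, hyk⟩
        · obtain ⟨m, hm, rfl⟩ := hy1
          obtain ⟨n, hn, hnx⟩ := hx₀.1
          have : m = n := hsub k ⟨hm, hyk⟩ ⟨hn, by simp only [Set.mem_preimage]; rw [hnx]; exact hx₀.2⟩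
          rw [this, hnx]
        · obtain ⟨l, hl, rfl⟩ := hy2
          have : l = k := key (hc l) hyk
          rw [this] at hl
          exact absurd (Set.eq_empty_iff_forall_notMem.mp hl x₀ hx₀) (fun h => h)

lemma ult_map_map (f g : ℕ → ℕ) (p : Ultrafilter ℕ) :
    Ultrafilter.map g (Ultrafilter.map f p) = Ultrafilter.map (g ∘ f) p := by
  apply Ultrafilter.coe_injective
  simp [Ultrafilter.coe_map, Filter.map_map]

lemma rkle_trans {U V W : Ultrafilter ℕ} (h1 : RKle U V) (h2 : RKle V W) : RKle U W := by
  obtain ⟨f, hf⟩ := h1; obtain ⟨g, hg⟩ := h2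
  exact ⟨g ∘ f, by rw [← ult_map_map, hf, hg]⟩

lemma rkle_map_self (h : ℕ → ℕ) (p : Ultrafilter ℕ) : RKle p (Ultrafilter.map h p) := ⟨h, rfl⟩

lemma rkle_map_inv {h : ℕ → ℕ} (hinj : Function.Injective h) (p : Ultrafilter ℕ) :
    RKle (Ultrafilter.map h p) p := by
  refine ⟨Function.invFun h, ?_⟩
  rw [ult_map_map, Function.invFun_comp hinj]
  apply Ultrafilter.coe_injective
  simp [Ultrafilter.coe_map]

lemma rkincomp_congr {p p' q q' : Ultrafilter ℕ} (hpq : RKle p q) (hqp : RKle q p)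
    (hpq' : RKle p' q') (hqp' : RKle q' p') (hinc : RKIncomp p p') : RKIncomp q q' := by
  constructor
  · intro hle
    exact hinc.1 (rkle_trans (rkle_trans hpq hle) hqp')
  · intro hle
    exact hinc.2 (rkle_trans (rkle_trans hpq' hle) hqp)

-- appended scratch
lemma getLastD_mem_cons : ∀ (l : List (Set ℕ)) (a d : Set ℕ), (a :: l).getLastD d ∈ a :: l := by
  intro l
  induction l with
  | nil => intro a d; simp
  | cons b t ih =>
    intro a d
    rw [List.getLastD_cons]
    exact List.mem_cons_of_mem a (ih b a)

lemma lastOf_infinite {T : List (Set ℕ)} (hT : IsTower T) : (lastOf T).Infinite := by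
  cases T with
  | nil => exact Set.infinite_univ
  | cons a l => exact hT.1 _ (getLastD_mem_cons l a Set.univ)

theorem statement4
    (hc : ∃ S : Set (Ultrafilter ℕ), (∀ p ∈ S, IsSelective p) ∧
      S.Pairwise RKIncomp ∧ #S = Cardinal.continuum) :
    ∃ p : List (Set ℕ) → ℕ → Ultrafilter ℕ,
      (∀ T, IsTower T → ∀ n, IsSelective (p T n) ∧ lastOf T ∈ p T n) ∧
      (∀ T T', IsTower T → IsTower T' → ∀ n n' : ℕ, (T, n) ≠ (T', n') →
        RKIncomp (p T n) (p T' n')) := by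
  classical
  obtain ⟨S, hSel, hPair, hcard⟩ := hc
  have hcard2 : #(List (Set ℕ) × ℕ) ≤ #(↥S) := by
    rw [hcard]
    have h1 : #(List (Set ℕ)) = Cardinal.continuum := by
      rw [Cardinal.mk_list_eq_mk, Cardinal.mk_set, Cardinal.mk_nat,
        Cardinal.two_power_aleph0]
    have : #(List (Set ℕ) × ℕ) = Cardinal.continuum * Cardinal.aleph0 := by
      rw [Cardinal.mk_prod, Cardinal.lift_id, Cardinal.lift_id, h1, Cardinal.mk_nat]
    rw [this, Cardinal.continuum_mul_aleph0]
  obtain ⟨ι⟩ := (Cardinal.le_def _ _).mp hcard2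
  -- embedding function for each T
  let emb : List (Set ℕ) → (ℕ → ℕ) := fun T =>
    if hT : (lastOf T).Infinite then (fun n => ((Set.Infinite.natEmbedding _ hT) n : ℕ)) else id
  have hembinj : ∀ T, Function.Injective (emb T) := by
    intro T
    by_cases hT : (lastOf T).Infinite
    · intro a b hab
      simp only [emb, dif_pos hT] at hab
      exact (Set.Infinite.natEmbedding _ hT).injective (Subtype.ext hab)
    · simp only [emb, dif_neg hT]
      exact fun a b hab => hab
  have hembrange : ∀ T, (lastOf T).Infinite → ∀ n, emb T n ∈ lastOf T := by
    intro T hT n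
    simp only [emb, dif_pos hT]
    exact ((Set.Infinite.natEmbedding _ hT) n).2
  refine ⟨fun T n => Ultrafilter.map (emb T) ((ι (T, n) : Ultrafilter ℕ)), ?_, ?_⟩
  · intro T hT n
    refine ⟨selective_map (hembinj T) (hSel _ (ι (T, n)).2), ?_⟩
    rw [Ultrafilter.mem_map]
    have : (emb T) ⁻¹' (lastOf T) = Set.univ :=
      Set.eq_univ_of_forall fun n => hembrange T (lastOf_infinite hT) n
    rw [this]
    exact Filter.univ_mem
  · intro T T' hT hT' n n' hne
    have hne2 : (ι (T, n) : Ultrafilter ℕ) ≠ (ι (T', n') : Ultrafilter ℕ) := by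
      intro hEq
      exact hne (ι.injective (Subtype.ext hEq))
    have hinc := hPair (ι (T, n)).2 (ι (T', n')).2 hne2
    exact rkincomp_congr (rkle_map_self _ _) (rkle_map_inv (hembinj T) _)
      (rkle_map_self _ _) (rkle_map_inv (hembinj T') _) hinc

end
end

section
/- Let κ be an infinite cardinal with κ^ω = κ. Then there exists a family (ℰ_T : T ∈ 𝒯) of subsets of (ℤ^(κ))^ω such that: (1) for every T ∈ 𝒯, ℰ_T is maximal with respect to inclusion among the subsets of (ℤ^(κ))^ω that are linearly independent mod l(T)*; and (2) for every T ∈ 𝒯 and n ≤ length(T), ℰ_{T↾n} ⊆ ℰ_T. -/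
open Cardinal Filter Set Pointwise

noncomputable section

/-!
Extending a set that is linearly independent mod `A*` to a maximal one is a Zorn argument:
linear independence of the family `[f]_p, [χ⃗_ξ]_p` is of finite character, so it passes to
unions of chains. Since `B ⊆ A` makes independence mod `A*` imply independence mod `B*`, the
sets `ℰ_T` can be built along a tower by extending `ℰ_{T↾(k-1)}` maximally mod `l(T↾k)*`.
-/

section Construction

variable {κ : Cardinal}

def ultFamily (κ : Cardinal) (p : Ultrafilter ℕ) :
    (ℕ → GZ κ) ⊕ Idx κ → Filter.Germ (↑p : Filter ℕ) (GQ κ) :=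
  Sum.elim (cls κ p) (clsChi κ p)

def constGermₗ (κ : Cardinal) (p : Ultrafilter ℕ) :
    GQ κ →ₗ[ℚ] Filter.Germ (↑p : Filter ℕ) (GQ κ) where
  toFun x := ↑(fun _ : ℕ => x)
  map_add' a b := Filter.Germ.coe_add (fun _ : ℕ => a) (fun _ : ℕ => b)
  map_smul' c x := Filter.Germ.coe_smul c (fun _ : ℕ => x)

theorem linearIndependent_clsChi (p : Ultrafilter ℕ) : LinearIndependent ℚ (clsChi κ p) := by
  have hinj : LinearMap.ker (constGermₗ κ p) = ⊥ :=
    LinearMap.ker_eq_bot.mpr fun _ _ h => Filter.Germ.const_inj.mp h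
  have hchi : constGermₗ κ p ∘ (fun ξ => Finsupp.single ξ 1) = clsChi κ p := by
    funext ξ
    simp [clsChi, cls, chi, toQ, constGermₗ]
  simpa only [hchi] using (Finsupp.linearIndependent_single_one ℚ (Idx κ)).map' _ hinj

theorem linIndepMod_iff_linearIndepOn {A : Set ℕ} {F : Set (ℕ → GZ κ)} :
    LinIndepMod κ A F ↔ ∀ p : Ultrafilter ℕ, IsFreeUltrafilter p → A ∈ p →
      LinearIndepOn ℚ (ultFamily κ p) (Sum.inl '' F ∪ range Sum.inr) := by
  have hinj : Function.Injective (Sum.map ((↑) : F → ℕ → GZ κ) (id : Idx κ → Idx κ)) :=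
    Subtype.val_injective.sumMap Function.injective_id
  have hrange : range (Sum.map ((↑) : F → ℕ → GZ κ) (id : Idx κ → Idx κ)) =
      Sum.inl '' F ∪ range Sum.inr := by
    ext (f | ξ) <;> simp
  refine forall₃_congr fun p _ _ => ?_
  rw [← hrange, linearIndepOn_range_iff hinj, ultFamily, Sum.elim_comp_map, Function.comp_id]
  -- distinctness of the classes is part of linear independence
  refine ⟨fun h => h.2, fun h => ⟨fun f hf g hg hfg => ?_, h⟩⟩
  exact h.injective.ne (a₁ := Sum.inl ⟨f, hf⟩) (a₂ := Sum.inl ⟨g, hg⟩) (by simpa using hfg)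

theorem linIndepMod_empty (A : Set ℕ) : LinIndepMod κ A ∅ := by
  refine linIndepMod_iff_linearIndepOn.mpr fun p _ _ => ?_
  rw [image_empty, empty_union, linearIndepOn_range_iff Sum.inr_injective]
  exact linearIndependent_clsChi p

theorem LinIndepMod.of_subset {A B : Set ℕ} {F : Set (ℕ → GZ κ)} (hAB : A ⊆ B)
    (h : LinIndepMod κ B F) : LinIndepMod κ A F :=
  fun p hp hA => h p hp (Filter.mem_of_superset hA hAB)

theorem linIndepMod_sUnion {A : Set ℕ} {c : Set (Set (ℕ → GZ κ))} (hc : IsChain (· ⊆ ·) c)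
    (hne : c.Nonempty) (h : ∀ E ∈ c, LinIndepMod κ A E) : LinIndepMod κ A (⋃₀ c) := by
  refine linIndepMod_iff_linearIndepOn.mpr fun p hp hA => ?_
  have hsub : Sum.inl '' ⋃₀ c ∪ range (Sum.inr : Idx κ → _) ⊆
      ⋃ E ∈ c, (Sum.inl '' E ∪ range Sum.inr) := by
    rintro _ (⟨f, ⟨E, hE, hf⟩, rfl⟩ | hξ)
    · exact mem_biUnion hE (Or.inl (mem_image_of_mem _ hf))
    · obtain ⟨E, hE⟩ := hne
      exact mem_biUnion hE (Or.inr hξ)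
  refine LinearIndepOn.mono (linearIndepOn_biUnion_of_directed ?_ fun E hE =>
    linIndepMod_iff_linearIndepOn.mp (h E hE) p hp hA) hsub
  exact hc.directedOn.mono fun _ _ hEF => union_subset_union_left _ (image_mono hEF)

theorem LinIndepMod.exists_maximal {A : Set ℕ} {F : Set (ℕ → GZ κ)} (hF : LinIndepMod κ A F) :
    ∃ E, F ⊆ E ∧ MaximalLinIndepMod κ A E := by
  obtain ⟨E, hFE, hE⟩ := zorn_subset_nonempty {E | LinIndepMod κ A E}
    (fun c hcS hc hne => ⟨⋃₀ c, linIndepMod_sUnion hc hne hcS, fun _ => subset_sUnion_of_mem⟩)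
    F hF
  exact ⟨E, hFE, hE.prop, fun E' hE' hEE' => (hE.eq_of_subset hE' hEE').symm⟩

open Classical in
/-- A maximal extension of `F` mod `A*`, or `F` itself if `F` is not independent mod `A*`. -/
def maximalExtension (κ : Cardinal) (A : Set ℕ) (F : Set (ℕ → GZ κ)) : Set (ℕ → GZ κ) :=
  if h : LinIndepMod κ A F then h.exists_maximal.choose else F

theorem subset_maximalExtension (A : Set ℕ) (F : Set (ℕ → GZ κ)) :
    F ⊆ maximalExtension κ A F := by
  unfold maximalExtension
  split_ifs with h
  exacts [h.exists_maximal.choose_spec.1, subset_rfl]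

theorem LinIndepMod.maximalLinIndepMod_maximalExtension {A : Set ℕ} {F : Set (ℕ → GZ κ)}
    (h : LinIndepMod κ A F) : MaximalLinIndepMod κ A (maximalExtension κ A F) := by
  rw [maximalExtension, dif_pos h]
  exact h.exists_maximal.choose_spec.2

variable (κ) in
/-- Indexed by reversed towers `[A_{k-1}, …, A_0]`, so that the recursion extends the family of
the tower with its last term removed. -/
def revTowerFamily : List (Set ℕ) → Set (ℕ → GZ κ)
  | [] => maximalExtension κ univ ∅
  | A :: L => maximalExtension κ A (revTowerFamily L)

theorem maximalLinIndepMod_revTowerFamily :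
    ∀ R : List (Set ℕ), R.IsChain (· ⊆ ·) →
      MaximalLinIndepMod κ (R.headD univ) (revTowerFamily κ R)
  | [], _ => (linIndepMod_empty univ).maximalLinIndepMod_maximalExtension
  | [A], _ => ((linIndepMod_empty univ).maximalLinIndepMod_maximalExtension.1.of_subset
      (subset_univ A)).maximalLinIndepMod_maximalExtension
  | A :: B :: L, h => by
    have hBL := maximalLinIndepMod_revTowerFamily (B :: L) h.tail
    exact (hBL.1.of_subset (List.isChain_cons_cons.mp h).1).maximalLinIndepMod_maximalExtension

theorem revTowerFamily_drop_subset :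
    ∀ (R : List (Set ℕ)) (m : ℕ), revTowerFamily κ (R.drop m) ⊆ revTowerFamily κ R
  | _, 0 => subset_rfl
  | [], _ + 1 => subset_rfl
  | A :: L, m + 1 =>
    (revTowerFamily_drop_subset L m).trans (subset_maximalExtension A (revTowerFamily κ L))

end Construction

theorem IsTower.isChain_reverse {T : List (Set ℕ)} (hT : IsTower T) :
    T.reverse.IsChain (· ⊆ ·) := by
  rw [List.isChain_reverse, List.isChain_iff_getElem]
  exact fun i hi => hT.2 i hi

theorem lastOf_eq_headD_reverse (T : List (Set ℕ)) : lastOf T = T.reverse.headD univ := by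
  rw [lastOf, List.getLastD_eq_getLast?, List.headD_eq_head?, List.head?_reverse]

theorem statement6_general (κ : Cardinal) :
    ∃ E : List (Set ℕ) → Set (ℕ → GZ κ),
      (∀ T, IsTower T → MaximalLinIndepMod κ (lastOf T) (E T)) ∧
      (∀ T, IsTower T → ∀ n ≤ T.length, E (T.take n) ⊆ E T) := by
  refine ⟨fun T => revTowerFamily κ T.reverse, fun T hT => ?_, fun T _ n _ => ?_⟩
  · rw [lastOf_eq_headD_reverse]
    exact maximalLinIndepMod_revTowerFamily T.reverse hT.isChain_reverse
  · simp only [List.reverse_take]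
    exact revTowerFamily_drop_subset T.reverse (T.length - n)

theorem statement6 (κ : Cardinal) (hκ : ℵ₀ ≤ κ) (hpow : κ ^ ℵ₀ = κ) :
    ∃ E : List (Set ℕ) → Set (ℕ → GZ κ),
      (∀ T, IsTower T → MaximalLinIndepMod κ (lastOf T) (E T)) ∧
      (∀ T, IsTower T → ∀ n ≤ T.length, E (T.take n) ⊆ E T) :=
  statement6_general κ

end
end

section
/- Let κ be an infinite cardinal with κ^ω = κ, let B ⊆ ω be infinite, let ℰ ⊆ (ℤ^(κ))^ω be maximal with respect to inclusion among the subsets that are linearly independent mod B*, and let g ∈ (ℤ^(κ))^ω. Then there exist an infinite subset A of B, a finite subset E of ℰ, a finite subset D of κ, and rational numbers (r_f : f ∈ E) and (s_ν : ν ∈ D) such that g(n) = Σ_{f ∈ E} r_f · f(n) + Σ_{ν ∈ D} s_ν · χ_ν for every n ∈ A. -/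
open Cardinal Filter Set Pointwise

noncomputable section

/-
If `g ∈ ℰ` there is nothing to prove. Otherwise maximality says that `ℰ ∪ {g}` is not
linearly independent mod `B*`, so for some free ultrafilter `p ∋ B` the class `[g]_p` lies in the
`ℚ`-span of the classes `[f]_p` (`f ∈ ℰ`) and `[χ⃗_ξ]_p`. An equation between finite linear
combinations in the ultrapower holds coordinatewise on a set in `p`; intersected with `B`, this set
is infinite because `p` is free.
-/

open Submodule

lemma IsFreeUltrafilter.infinite_of_mem {p : Ultrafilter ℕ} (hp : IsFreeUltrafilter p)
    {S : Set ℕ} (hS : S ∈ p) : S.Infinite := fun hfin =>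
  let ⟨x, _, hx⟩ := Ultrafilter.eq_pure_of_finite_mem hfin hS
  hp x hx

namespace Filter.Germ

variable {α ι R M : Type*} [Semiring R] [AddCommMonoid M] [Module R M] {l : Filter α}

variable (R l) in
def coeLinearMap : (α → M) →ₗ[R] Germ l M where
  toFun := (↑)
  map_add' _ _ := rfl
  map_smul' _ _ := rfl

lemma exists_eventually_eq_sum_of_mem_span {v : ι → α → M} {s : Set ι} {u : α → M}
    (hu : (u : Germ l M) ∈ span R ((fun i => (v i : Germ l M)) '' s)) :
    ∃ c : ι →₀ R, ↑c.support ⊆ s ∧ ∀ᶠ n in l, u n = ∑ i ∈ c.support, c i • v i n := by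
  obtain ⟨c, hcs, hc⟩ := Finsupp.mem_span_image_iff_linearCombination R |>.mp hu
  refine ⟨c, hcs, Germ.coe_eq.mp ?_⟩
  rw [← hc, show (fun i => (v i : Germ l M)) = coeLinearMap R l ∘ v from rfl,
    ← Finsupp.apply_linearCombination]
  refine congrArg (coeLinearMap R l) (funext fun n => ?_)
  simp [Finsupp.linearCombination_apply, Finsupp.sum]

end Filter.Germ

lemma linearIndependent_sumElim_iff_linearIndepOn {ι ι' R M : Type*} [Semiring R]
    [AddCommMonoid M] [Module R M] {w : ι ⊕ ι' → M} {s : Set ι} :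
    LinearIndependent R (Sum.elim (fun i : s => w (Sum.inl i)) (fun j => w (Sum.inr j))) ↔
      LinearIndepOn R w (Sum.inl '' s ∪ range Sum.inr) := by
  have hrange : range (Sum.map ((↑) : s → ι) (id : ι' → ι')) = Sum.inl '' s ∪ range Sum.inr := by
    ext (_ | _) <;> simp
  rw [← hrange, linearIndepOn_range_iff (Subtype.val_injective.sumMap Function.injective_id)]
  convert Iff.rfl using 2
  ext (_ | _) <;> rfl

section Ultrapower

variable {κ : Cardinal} {p : Ultrafilter ℕ}

/-- Indexes the sequences `f` and `χ⃗_ξ` by one type, so that their classes `[f]_p` and `[χ⃗_ξ]_p`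
form a single family of germs. -/
def seqQ (κ : Cardinal) : (ℕ → GZ κ) ⊕ Idx κ → ℕ → GQ κ :=
  Sum.elim (fun f n => toQ κ (f n)) (fun ξ _ => toQ κ (chi κ ξ))

def clsSpan (κ : Cardinal) (p : Ultrafilter ℕ) (F : Set (ℕ → GZ κ)) :
    Submodule ℚ (Germ (p : Filter ℕ) (GQ κ)) :=
  span ℚ ((fun i => (seqQ κ i : Germ (p : Filter ℕ) (GQ κ))) '' (Sum.inl '' F ∪ range Sum.inr))

def LinIndepAt (κ : Cardinal) (p : Ultrafilter ℕ) (F : Set (ℕ → GZ κ)) : Prop :=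
  (∀ f ∈ F, ∀ g ∈ F, f ≠ g → cls κ p f ≠ cls κ p g) ∧
    LinearIndependent ℚ (Sum.elim (fun f : F => cls κ p ↑f) (fun ξ : Idx κ => clsChi κ p ξ))

lemma LinIndepAt.insert {F : Set (ℕ → GZ κ)} {g : ℕ → GZ κ} (hF : LinIndepAt κ p F)
    (hg : cls κ p g ∉ clsSpan κ p F) :
    LinIndepAt κ p (insert g F) := by
  set w := fun i => (seqQ κ i : Germ (p : Filter ℕ) (GQ κ))
  have hmem : ∀ f ∈ F, cls κ p f ∈ clsSpan κ p F :=
    fun f hf => subset_span ⟨Sum.inl f, Or.inl ⟨f, hf, rfl⟩, rfl⟩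
  have hgF : g ∉ F := fun h => hg (hmem g h)
  refine ⟨?_, ?_⟩
  · rintro f (rfl | hf) f' (rfl | hf') hne hcls
    · exact hne rfl
    · exact hg (hcls ▸ hmem f' hf')
    · exact hg (hcls ▸ hmem f hf)
    · exact hF.1 f hf f' hf' hne hcls
  · have hFon := (linearIndependent_sumElim_iff_linearIndepOn (w := w)).mp hF.2
    refine (linearIndependent_sumElim_iff_linearIndepOn (w := w)).mpr ?_
    rw [image_insert_eq, insert_union]
    exact (linearIndepOn_insert (by simpa using hgF)).mpr ⟨hFon, hg⟩

lemma MaximalLinIndepMod.exists_cls_mem_span {B : Set ℕ} {E : Set (ℕ → GZ κ)}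
    {g : ℕ → GZ κ} (hE : MaximalLinIndepMod κ B E) (hg : g ∉ E) :
    ∃ p : Ultrafilter ℕ, IsFreeUltrafilter p ∧ B ∈ p ∧ cls κ p g ∈ clsSpan κ p E := by
  by_contra! h
  have hind : LinIndepMod κ B (insert g E) :=
    fun p hp hBp => LinIndepAt.insert (hE.1 p hp hBp) (h p hp hBp)
  exact hg (hE.2 _ hind (subset_insert g E) ▸ mem_insert g E)

end Ultrapower

theorem statement7_general (κ : Cardinal)
    (B : Set ℕ) (hB : B.Infinite)
    (E : Set (ℕ → GZ κ)) (hE : MaximalLinIndepMod κ B E)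
    (g : ℕ → GZ κ) :
    ∃ A ⊆ B, A.Infinite ∧
      ∃ E₀ : Finset (ℕ → GZ κ), ↑E₀ ⊆ E ∧
      ∃ D : Finset (Idx κ), ∃ r : (ℕ → GZ κ) → ℚ, ∃ s : Idx κ → ℚ,
        ∀ n ∈ A, toQ κ (g n) =
          (∑ f ∈ E₀, r f • toQ κ (f n)) + ∑ ν ∈ D, s ν • toQ κ (chi κ ν) := by
  by_cases hg : g ∈ E
  · exact ⟨B, subset_rfl, hB, {g}, by simpa using hg, ∅, fun _ => 1, fun _ => 0, by simp⟩
  obtain ⟨p, hp, hBp, hspan⟩ := hE.exists_cls_mem_span hg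
  obtain ⟨c, hcE, hc⟩ :=
    Germ.exists_eventually_eq_sum_of_mem_span (u := fun n => toQ κ (g n)) hspan
  refine ⟨B ∩ _, inter_subset_left, hp.infinite_of_mem (inter_mem hBp hc), c.support.toLeft,
    fun f hf => ?_, c.support.toRight, fun f => c (Sum.inl f), fun ξ => c (Sum.inr ξ), ?_⟩
  · simpa using hcE (Finset.mem_toLeft.mp hf)
  · rintro n ⟨-, hn⟩
    rw [hn]
    conv_lhs => rw [← c.support.toLeft_disjSum_toRight, Finset.sum_disjSum]
    rfl

theorem statement7 (κ : Cardinal) (hκ : ℵ₀ ≤ κ) (hpow : κ ^ ℵ₀ = κ)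
    (B : Set ℕ) (hB : B.Infinite)
    (E : Set (ℕ → GZ κ)) (hE : MaximalLinIndepMod κ B E)
    (g : ℕ → GZ κ) :
    ∃ A ⊆ B, A.Infinite ∧
      ∃ E₀ : Finset (ℕ → GZ κ), ↑E₀ ⊆ E ∧
      ∃ D : Finset (Idx κ), ∃ r : (ℕ → GZ κ) → ℚ, ∃ s : Idx κ → ℚ,
        ∀ n ∈ A, toQ κ (g n) =
          (∑ f ∈ E₀, r f • toQ κ (f n)) + ∑ ν ∈ D, s ν • toQ κ (chi κ ν) :=
  statement7_general κ B hB E hE g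

end
end

section
/- Let κ be an infinite cardinal with κ^ω = κ, let p be a free ultrafilter on ω, let n ∈ ω, and let {f_ξ : κ ≤ ξ < κ + κ} ⊆ (ℤ^(κ))^ω be a family such that the classes [f_ξ]_p (κ ≤ ξ < κ+κ) are pairwise distinct and {[f_ξ]_p : κ ≤ ξ < κ+κ} ∪ {[χ⃗_ξ]_p : ξ < κ} is a ℚ-linearly independent subset of Ult(ℚ,p). Let G be the intersection of Ult(ℤ,p) with the subgroup of Ult(ℚ,p) generated by {(1/n!)·[f_ξ]_p : κ ≤ ξ < κ+κ} ∪ {(1/n!)·[χ⃗_ξ]_p : ξ < κ}. Then G is a free abelian group that admits a free basis of the form {[χ⃗_ξ]_p : ξ < κ} ∪ {[f]_p : f ∈ ℱ} for some subset ℱ of (ℤ^(κ))^ω. -/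
/-!
Let `e` be the `ℚ`-linearly independent family `([f_ξ]_p, [χ⃗_ξ]_p)`. The group `G` lies in the
free `ℤ`-module spanned by `e / n!`, so reading off the `f`-coordinates in that basis is a
homomorphism `π : G → ℤ^(κ)`. Its kernel is the copy `c ↦ Σ c_ξ [χ⃗_ξ]_p` of `ℤ^(κ)`: an element
of the kernel has a nonzero multiple that is the class of a constant sequence, and an element of
`Ult(ℤ,p)` with that property is itself the class of a constant integer sequence. The image of `π`
is a subgroup of the free group `ℤ^(κ)`, hence free, so `0 → ℤ^(κ) → G → im π → 0` splits; the
basis `(χ_ξ)` of `ℤ^(κ)` together with lifts of a basis of `im π` is a basis of `G`, and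
representing the lifts by integer sequences gives `ℱ`.
-/

open Cardinal Filter Set Pointwise

noncomputable section

/-- The subgroup `G_{T,n}`: the intersection of `Ult(ℤ,p)` with the subgroup of
`Ult(ℚ,p)` generated by `{(1/n!)·[f]_p : f ∈ S} ∪ {(1/n!)·[χ⃗_ξ]_p : ξ < κ}`. -/
def Gsub (κ : Cardinal) (p : Ultrafilter ℕ) (S : Set (ℕ → GZ κ)) (n : ℕ) :
    AddSubgroup (Filter.Germ (↑p : Filter ℕ) (GQ κ)) :=
  UltZ κ p ⊓ AddSubgroup.closure
    ({x | ∃ f ∈ S, x = ((n.factorial : ℚ))⁻¹ • cls κ p f} ∪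
     {x | ∃ ξ : Idx κ, x = ((n.factorial : ℚ))⁻¹ • clsChi κ p ξ})

open Finsupp Submodule

theorem Finsupp.linearIndependent_of_triangular {R ι σ : Type*} [Ring R] [NoZeroDivisors R]
    [LinearOrder ι] {v : σ → ι →₀ R} {s : σ → ι} (hs : Function.Injective s)
    (hdiag : ∀ a, v a (s a) ≠ 0) (hlow : ∀ a j, s a < j → v a j = 0) :
    LinearIndependent R v := by
  classical
  rw [linearIndependent_iff]
  intro l hl
  by_contra hl0
  obtain ⟨a, ha, hmax⟩ := l.support.exists_max_image s (support_nonempty_iff.2 hl0)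
  have hcoord := DFunLike.congr_fun hl (s a)
  rw [linearCombination_apply, Finsupp.sum, finsetSum_apply, Finset.sum_eq_single a
    (fun b hb hba => by rw [smul_apply, hlow b _ ((hmax b hb).lt_of_ne (hs.ne hba)), smul_zero])
    (fun h => absurd ha h)] at hcoord
  exact mul_ne_zero (mem_support_iff.1 ha) (hdiag a) hcoord

theorem Finsupp.exists_mem_supported_Iic {R ι : Type*} [Semiring R] [LinearOrder ι]
    {z : ι →₀ R} (hz : z ≠ 0) : ∃ m ∈ z.support, z ∈ supported R R (Iic m) :=
  ⟨_, z.support.max'_mem (support_nonempty_iff.2 hz),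
    (mem_supported _ _).2 fun j hj => z.support.le_max' j hj⟩

section FreeSubmodule

variable {R ι : Type*} [CommRing R] [IsPrincipalIdealRing R] [LinearOrder ι]

namespace Submodule

variable (N : Submodule R (ι →₀ R))

def leadingCoeffIdeal (i : ι) : Ideal R :=
  (N ⊓ supported R R (Iic i)).map (lapply i)

theorem exists_mem_apply_eq_generator (i : ι) : ∃ y ∈ N, y ∈ supported R R (Iic i) ∧
    y i = IsPrincipal.generator (N.leadingCoeffIdeal i) := by
  obtain ⟨y, hy, hyi⟩ := mem_map.1 (IsPrincipal.generator_mem (N.leadingCoeffIdeal i))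
  exact ⟨y, (mem_inf.1 hy).1, (mem_inf.1 hy).2, hyi⟩

theorem generator_leadingCoeffIdeal_dvd {i : ι} {y : ι →₀ R} (hy : y ∈ N)
    (hys : y ∈ supported R R (Iic i)) : IsPrincipal.generator (N.leadingCoeffIdeal i) ∣ y i :=
  (IsPrincipal.mem_iff_generator_dvd _).1 (mem_map_of_mem (mem_inf.2 ⟨hy, hys⟩))

theorem free_of_wellFoundedLT [IsDomain R] [WellFoundedLT ι] : Module.Free R N := by
  classical
  -- `x i ∈ N` is supported on `Iic i` and its `i`-th coordinate generates all such coordinates;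
  -- the `x i` with nonzero diagonal entry form a triangular basis of `N`.
  choose x hxN hxsupp hxdiag using N.exists_mem_apply_eq_generator
  let S := {i // IsPrincipal.generator (N.leadingCoeffIdeal i) ≠ 0}
  have hli : LinearIndependent R fun a : S => x a :=
    linearIndependent_of_triangular Subtype.val_injective (fun a => by rw [hxdiag]; exact a.2)
      fun a j hj => notMem_support_iff.1 fun h => hj.not_ge ((mem_supported _ _).1 (hxsupp a) h)
  have hmem_span : ∀ i, ∀ y ∈ N, y ∈ supported R R (Iic i) →
      y ∈ span R (range fun a : S => x a) := by
    intro i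
    induction i using WellFoundedLT.induction with
    | _ i IH =>
    have hvanish : ∀ z ∈ N, z ∈ supported R R (Iic i) → z i = 0 →
        z ∈ span R (range fun a : S => x a) := by
      intro z hzN hzs hzi
      rcases eq_or_ne z 0 with rfl | hz0
      · exact zero_mem _
      obtain ⟨m, hm, hzm⟩ := exists_mem_supported_Iic hz0
      refine IH m (((mem_supported _ _).1 hzs hm).lt_of_ne ?_) z hzN hzm
      rintro rfl
      exact mem_support_iff.1 hm hzi
    intro y hy hys
    obtain ⟨c, hc⟩ := N.generator_leadingCoeffIdeal_dvd hy hys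
    by_cases hd : IsPrincipal.generator (N.leadingCoeffIdeal i) = 0
    · exact hvanish y hy hys (by rw [hc, hd, zero_mul])
    have hrest := hvanish (y - c • x i) (sub_mem hy (smul_mem _ c (hxN i)))
      (sub_mem hys (smul_mem _ c (hxsupp i))) (by simp [hc, hxdiag, mul_comm])
    simpa using add_mem hrest (smul_mem _ c (subset_span ⟨⟨i, hd⟩, rfl⟩))
  have hspan : span R (range fun a : S => x a) = N := by
    refine le_antisymm (span_le.2 (range_subset_iff.2 fun a => hxN a)) fun y hy => ?_
    rcases eq_or_ne y 0 with rfl | hy0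
    · exact zero_mem _
    obtain ⟨m, -, hym⟩ := exists_mem_supported_Iic hy0
    exact hmem_span m y hy hym
  have := Module.Free.of_basis (Module.Basis.span hli)
  exact Module.Free.of_equiv (LinearEquiv.ofEq _ _ hspan)

end Submodule

end FreeSubmodule

theorem Submodule.free_of_isPrincipalIdealRing {R M : Type*} [CommRing R] [IsDomain R]
    [IsPrincipalIdealRing R] [AddCommGroup M] [Module R M] [Module.Free R M]
    (N : Submodule R M) : Module.Free R N := by
  let b := Module.Free.chooseBasis R M
  let _ := IsWellOrder.linearOrder (@WellOrderingRel (Module.Free.ChooseBasisIndex R M))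
  have : WellFoundedLT (Module.Free.ChooseBasisIndex R M) := ⟨WellOrderingRel.isWellOrder.wf⟩
  have := (N.map b.repr.toLinearMap).free_of_wellFoundedLT
  exact Module.Free.of_equiv (N.equivMapOfInjective _ b.repr.injective).symm

theorem Function.Exact.exists_basis_sum {R M N P ι : Type*} [Ring R] [AddCommGroup M]
    [AddCommGroup N] [AddCommGroup P] [Module R M] [Module R N] [Module R P]
    {f : M →ₗ[R] N} {g : N →ₗ[R] P} [Module.Free R (LinearMap.range g)]
    (hfg : Function.Exact f g) (hf : Function.Injective f) (bM : Module.Basis ι R M) :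
    ∃ b : Module.Basis (ι ⊕ Module.Free.ChooseBasisIndex R (LinearMap.range g)) R N,
      ∀ i, b (.inl i) = f (bM i) := by
  have hexact : Function.Exact f g.rangeRestrict :=
    LinearMap.exact_iff.2 ((LinearMap.ker_rangeRestrict g).trans (LinearMap.exact_iff.1 hfg))
  obtain ⟨l, hl⟩ := Module.projective_lifting_property g.rangeRestrict LinearMap.id
    g.surjective_rangeRestrict
  obtain ⟨e, hef, -⟩ := hexact.splitSurjectiveEquiv hf ⟨l, hl⟩
  exact ⟨(bM.prod (Module.Free.chooseBasis R _)).map e.symm, fun i => by simp [hef]⟩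

section Ultrapower

variable {κ : Cardinal} {p : Ultrafilter ℕ}

theorem toQ_injective : Function.Injective (toQ κ) :=
  Finsupp.mapRange_injective _ Int.cast_zero Int.cast_injective

theorem cls_eq_cls_iff {g g' : ℕ → GZ κ} :
    cls κ p g = cls κ p g' ↔ ∀ᶠ m in (p : Filter ℕ), g m = g' m := by
  simp only [cls, Germ.coe_eq, EventuallyEq, toQ_injective.eq_iff]

theorem cls_zsmul (k : ℤ) (g : ℕ → GZ κ) : cls κ p (k • g) = k • cls κ p g :=
  map_zsmul (clsHom κ p) k g

theorem cls_const_eq_linearCombination (c : GZ κ) :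
    cls κ p (fun _ => c) = linearCombination ℤ (clsChi κ p) c := by
  induction c using Finsupp.induction_linear with
  | zero => exact map_zero (clsHom κ p)
  | add c d hc hd => rw [map_add, ← hc, ← hd]; exact map_add (clsHom κ p) (fun _ => c) (fun _ => d)
  | single ξ a =>
    rw [linearCombination_single, clsChi, ← cls_zsmul]
    congr 1
    funext
    simp [chi]

theorem exists_cls_const_of_zsmul_eq {k : ℤ} (hk : k ≠ 0) {g : ℕ → GZ κ} {c : GZ κ}
    (h : k • cls κ p g = cls κ p (fun _ => c)) : ∃ c' : GZ κ, cls κ p g = cls κ p (fun _ => c') := by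
  rw [← cls_zsmul, cls_eq_cls_iff] at h
  obtain ⟨m₀, hm₀⟩ := h.exists
  refine ⟨g m₀, cls_eq_cls_iff.2 (h.mono fun m hm => smul_right_injective (GZ κ) hk ?_)⟩
  simp only [Pi.smul_apply] at hm hm₀
  exact hm.trans hm₀.symm

end Ultrapower

theorem natCast_zsmul_inv_smul {V : Type*} [AddCommGroup V] [Module ℚ V] {d : ℕ} (hd : d ≠ 0)
    (v : V) : (d : ℤ) • ((d : ℚ)⁻¹ • v) = v := by
  rw [← Int.cast_smul_eq_zsmul ℚ, Int.cast_natCast, smul_inv_smul₀ (Nat.cast_ne_zero.2 hd)]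

namespace Gsub

variable {κ : Cardinal} {p : Ultrafilter ℕ} {ι : Type*} {f : ι → ℕ → GZ κ} {n : ℕ}

variable (κ p f n) in
def generators : ι ⊕ Idx κ → Germ (p : Filter ℕ) (GQ κ) :=
  fun j => ((n.factorial : ℚ))⁻¹ • Sum.elim (fun i => cls κ p (f i)) (clsChi κ p) j

theorem eq_inf_span :
    Gsub κ p (range f) n = UltZ κ p ⊓ (span ℤ (range (generators κ p f n))).toAddSubgroup := by
  rw [Gsub, span_int_eq_addSubgroupClosure]
  congr 2
  ext x
  constructor
  · rintro (⟨-, ⟨i, rfl⟩, rfl⟩ | ⟨ξ, rfl⟩)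
    exacts [⟨.inl i, rfl⟩, ⟨.inr ξ, rfl⟩]
  · rintro ⟨i | ξ, rfl⟩
    exacts [.inl ⟨f i, ⟨i, rfl⟩, rfl⟩, .inr ⟨ξ, rfl⟩]

theorem le_UltZ : Gsub κ p (range f) n ≤ UltZ κ p := inf_le_left

theorem le_span : Gsub κ p (range f) n ≤ (span ℤ (range (generators κ p f n))).toAddSubgroup := by
  rw [eq_inf_span]
  exact inf_le_right

theorem clsChi_mem (ξ : Idx κ) : clsChi κ p ξ ∈ Gsub κ p (range f) n := by
  rw [eq_inf_span]
  refine ⟨⟨fun _ => chi κ ξ, rfl⟩, ?_⟩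
  rw [← natCast_zsmul_inv_smul n.factorial_ne_zero (clsChi κ p ξ)]
  exact zsmul_mem (subset_span (mem_range_self (Sum.inr ξ))) _

variable (p f n) in
def constEmb : (Idx κ →₀ ℤ) →ₗ[ℤ] Gsub κ p (range f) n :=
  linearCombination ℤ fun ξ => ⟨clsChi κ p ξ, clsChi_mem ξ⟩

theorem coe_constEmb (c : Idx κ →₀ ℤ) :
    (constEmb p f n c : Germ (p : Filter ℕ) (GQ κ)) = cls κ p (fun _ => c) := by
  rw [cls_const_eq_linearCombination]
  exact apply_linearCombination ℤ (Gsub κ p (range f) n).subtype.toIntLinearMap _ c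

theorem constEmb_single (ξ : Idx κ) :
    (constEmb p f n (Finsupp.single ξ 1) : Germ (p : Filter ℕ) (GQ κ)) = clsChi κ p ξ := by
  simp [constEmb]

theorem linearCombination_generators_mapDomain_inr (c : Idx κ →₀ ℤ) :
    linearCombination ℤ (generators κ p f n) (mapDomain Sum.inr ((n.factorial : ℤ) • c)) =
      cls κ p (fun _ => c) := by
  rw [linearCombination_mapDomain, map_zsmul, cls_const_eq_linearCombination,
    linearCombination_apply, linearCombination_apply, Finsupp.smul_sum]
  refine Finsupp.sum_congr fun ξ _ => ?_
  rw [smul_comm]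
  exact congrArg (_ • ·) (natCast_zsmul_inv_smul n.factorial_ne_zero (clsChi κ p ξ))

variable (hli : LinearIndependent ℚ (Sum.elim (fun i => cls κ p (f i)) (clsChi κ p)))
include hli

theorem constEmb_injective : Function.Injective (constEmb p f n) := by
  intro c c' h
  have hchi : LinearIndependent ℤ (clsChi κ p) :=
    (hli.comp Sum.inr Sum.inr_injective).restrict_scalars' ℤ
  apply hchi
  simpa only [coe_constEmb, cls_const_eq_linearCombination] using congrArg Subtype.val h

theorem linearIndependent_generators : LinearIndependent ℤ (generators κ p f n) :=
  (hli.units_smul fun _ => Units.mk0 _ (inv_ne_zero (Nat.cast_ne_zero.2 n.factorial_ne_zero))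
    ).restrict_scalars' ℤ

def fCoord : Gsub κ p (range f) n →ₗ[ℤ] (ι →₀ ℤ) :=
  ((lcomapDomain (R := ℤ) (M := ℤ) Sum.inl Sum.inl_injective).toAddMonoidHom.comp
    ((linearIndependent_generators hli).repr.toAddMonoidHom.comp
      (AddSubgroup.inclusion le_span))).toIntLinearMap

theorem fCoord_apply (x : Gsub κ p (range f) n) :
    fCoord hli x = ((linearIndependent_generators hli).repr ⟨x, le_span x.2⟩).comapDomain
      Sum.inl Sum.inl_injective.injOn :=
  rfl

theorem exact_constEmb_fCoord : Function.Exact (constEmb p f n) (fCoord hli) := by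
  intro x
  constructor
  · intro hx
    set c := (linearIndependent_generators hli).repr ⟨x, le_span x.2⟩ with hc
    have hc_inr : c = mapDomain Sum.inr (c.comapDomain Sum.inr Sum.inr_injective.injOn) := by
      rw [fCoord_apply, ← hc] at hx
      conv_lhs => rw [← comapDomain_sumElim_comapDomain c, hx, sumElim_eq_add, mapDomain_zero,
        zero_add]
    obtain ⟨g, hg⟩ := le_UltZ x.2
    have hmul : (n.factorial : ℤ) • cls κ p g =
        cls κ p (fun _ => c.comapDomain Sum.inr Sum.inr_injective.injOn) := by
      rw [← linearCombination_generators_mapDomain_inr (f := f), mapDomain_smul, ← hc_inr,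
        map_zsmul, (linearIndependent_generators hli).linearCombination_repr]
      exact congrArg _ hg
    obtain ⟨c', hc'⟩ := exists_cls_const_of_zsmul_eq (by positivity) hmul
    exact ⟨c', Subtype.ext (by rw [coe_constEmb, ← hc', ← hg]; rfl)⟩
  · rintro ⟨d, rfl⟩
    rw [fCoord_apply, (linearIndependent_generators hli).repr_eq
      ((linearCombination_generators_mapDomain_inr d).trans (coe_constEmb d).symm)]
    ext i
    exact mapDomain_of_notMem_range _ _ (by simp)

end Gsub

theorem exists_basis_cls_of_basis {κ : Cardinal} {p : Ultrafilter ℕ}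
    {G : AddSubgroup (Germ (p : Filter ℕ) (GQ κ))} (hG : G ≤ UltZ κ p) {σ : Type*}
    (b : Module.Basis (Idx κ ⊕ σ) ℤ G)
    (hb : ∀ ξ, (b (.inl ξ) : Germ (p : Filter ℕ) (GQ κ)) = clsChi κ p ξ) :
    ∃ F : Set (ℕ → GZ κ), ∃ b' : Module.Basis (Idx κ ⊕ F) ℤ G,
      (∀ ξ, (b' (.inl ξ) : Germ (p : Filter ℕ) (GQ κ)) = clsChi κ p ξ) ∧
      ∀ g : F, (b' (.inr g) : Germ (p : Filter ℕ) (GQ κ)) = cls κ p g := by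
  choose rep hrep using fun j => hG (b (.inr j)).2
  have hinj : Function.Injective rep := fun j j' h =>
    Sum.inr_injective (b.injective (Subtype.ext (by rw [← hrep, ← hrep, h])))
  refine ⟨range rep, b.reindex (Equiv.sumCongr (Equiv.refl _) (Equiv.ofInjective rep hinj)),
    fun ξ => by simpa using hb ξ, fun g => ?_⟩
  simp only [Module.Basis.reindex_apply, Equiv.sumCongr_symm, Equiv.sumCongr_apply, Sum.map_inr,
    ← hrep, Equiv.apply_ofInjective_symm]
  rfl

theorem statement10_general (κ : Cardinal)
    (p : Ultrafilter ℕ) (n : ℕ)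
    (f : Idx κ → (ℕ → GZ κ))
    (hli : LinearIndependent ℚ
      (Sum.elim (fun ξ : Idx κ => cls κ p (f ξ)) (fun ξ : Idx κ => clsChi κ p ξ))) :
    ∃ F : Set (ℕ → GZ κ),
      ∃ b : Module.Basis ((Idx κ) ⊕ F) ℤ ↥(Gsub κ p (Set.range f) n),
        (∀ ξ : Idx κ,
          ((b (Sum.inl ξ) : ↥(Gsub κ p (Set.range f) n)) :
            Filter.Germ (↑p : Filter ℕ) (GQ κ)) = clsChi κ p ξ) ∧
        (∀ g : F,
          ((b (Sum.inr g) : ↥(Gsub κ p (Set.range f) n)) :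
            Filter.Germ (↑p : Filter ℕ) (GQ κ)) = cls κ p ↑g) := by
  have : Module.Free ℤ (LinearMap.range (Gsub.fCoord (n := n) hli)) :=
    Submodule.free_of_isPrincipalIdealRing _
  obtain ⟨b, hb⟩ :=
    (Gsub.exact_constEmb_fCoord (n := n) hli).exists_basis_sum (Gsub.constEmb_injective hli)
    Finsupp.basisSingleOne
  exact exists_basis_cls_of_basis Gsub.le_UltZ b fun ξ => by
    rw [hb, Finsupp.coe_basisSingleOne, Gsub.constEmb_single]

theorem statement10 (κ : Cardinal) (hκ : ℵ₀ ≤ κ) (hpow : κ ^ ℵ₀ = κ)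
    (p : Ultrafilter ℕ) (hp : IsFreeUltrafilter p) (n : ℕ)
    (f : Idx κ → (ℕ → GZ κ))
    (hdist : ∀ ξ ζ : Idx κ, ξ ≠ ζ → cls κ p (f ξ) ≠ cls κ p (f ζ))
    (hli : LinearIndependent ℚ
      (Sum.elim (fun ξ : Idx κ => cls κ p (f ξ)) (fun ξ : Idx κ => clsChi κ p ξ))) :
    ∃ F : Set (ℕ → GZ κ),
      ∃ b : Module.Basis ((Idx κ) ⊕ F) ℤ ↥(Gsub κ p (Set.range f) n),
        (∀ ξ : Idx κ,
          ((b (Sum.inl ξ) : ↥(Gsub κ p (Set.range f) n)) :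
            Filter.Germ (↑p : Filter ℕ) (GQ κ)) = clsChi κ p ξ) ∧
        (∀ g : F,
          ((b (Sum.inr g) : ↥(Gsub κ p (Set.range f) n)) :
            Filter.Germ (↑p : Filter ℕ) (GQ κ)) = cls κ p ↑g) :=
  statement10_general κ p n f hli

end
end

section
/- Let κ be an infinite cardinal with κ^ω = κ. Suppose: (i) (p_{T,n} : T ∈ 𝒯, n ∈ ω) is a family of pairwise Rudin–Keisler incomparable selective ultrafilters on ω with l(T) ∈ p_{T,n} for all T, n; (ii) (ℰ_T : T ∈ 𝒯) is a family of subsets of (ℤ^(κ))^ω such that each ℰ_T is maximal among subsets linearly independent mod l(T)* and ℰ_{T↾m} ⊆ ℰ_T for m ≤ length(T); (iii) for each T ∈ 𝒯 and n ∈ ω, ℱ_{T,n} ⊆ (ℤ^(κ))^ω is a set such that {[χ⃗_ξ]_{p_{T,n}} : ξ < κ} ∪ {[f]_{p_{T,n}} : f ∈ ℱ_{T,n}} is a free basis of the group G_{T,n}, where G_{T,n} is the intersection of Ult(ℤ, p_{T,n}) with the subgroup of Ult(ℚ, p_{T,n}) generated by {(1/n!)·[f]_{p_{T,n}} : f ∈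 ℰ_T} ∪ {(1/n!)·[χ⃗_ξ]_{p_{T,n}} : ξ < κ}; and (iv) ℤ^(κ) carries a group topology such that for every T ∈ 𝒯, n ∈ ω and every f ∈ ℱ_{T,n}, the sequence (f(k) : k ∈ ω) has a p_{T,n}-limit in ℤ^(κ). Then for every m ∈ ω the product topology on (ℤ^(κ))^m is countably compact. -/
/-!
Given a sequence `s` in `(ℤ^(κ))^m`, adjoin its coordinates one at a time to the maximal
independent families `ℰ_T`: a coordinate outside `ℰ_T` is, by maximality, a rational
combination of `ℰ_T` and the constants `χ_ξ` on an infinite `B ⊆ l(T)`, and extending the tower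
by `B` keeps this true for the earlier coordinates. This yields one tower `T` such that every
coordinate is, on `l(T)`, a rational combination of `ℰ_T` and constants, with denominators
bounded by some `N`. For `P = p_{T,N}` the class of each coordinate then lies in `G_{T,N}`,
whose free basis consists of classes of sequences with `P`-limits, so `s` has a `P`-limit.
A free ultrafilter limit is a cluster point, and sequences with cluster points give countable
compactness.
-/

open Cardinal Filter Set Pointwise

noncomputable section

open Topology

lemma IsFreeUltrafilter.le_atTop {p : Ultrafilter ℕ} (hp : IsFreeUltrafilter p) :
    (p : Filter ℕ) ≤ atTop := by
  rcases p.le_cofinite_or_eq_pure with h | ⟨n, rfl⟩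
  · rwa [← Nat.cofinite_eq_atTop]
  · exact absurd rfl (hp n)

lemma IsFreeUltrafilter.infinite_of_mem_s11 {p : Ultrafilter ℕ} (hp : IsFreeUltrafilter p)
    {A : Set ℕ} (hA : A ∈ p) : A.Infinite := fun hfin => by
  obtain ⟨n, -, rfl⟩ := Ultrafilter.eq_pure_of_finite_mem hfin hA
  exact hp n rfl

lemma isPLim_iff_tendsto {X : Type*} [TopologicalSpace X] {p : Ultrafilter ℕ} {s : ℕ → X}
    {x : X} : IsPLim p s x ↔ Tendsto s p (𝓝 x) :=
  tendsto_def.symm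

lemma countablyCompactSp_of_isCountablyCompact_univ {X : Type*} [TopologicalSpace X]
    (hX : IsCountablyCompact (univ : Set X)) : CountablyCompactSp X := by
  intro 𝒰 hcount hopen hcover
  obtain ⟨t, ht𝒰, htfin, hcov⟩ := hX.elim_finite_subcover_image (U := id) hcount hopen
    (by simp [← sUnion_eq_biUnion, hcover])
  exact ⟨t, ht𝒰, htfin, univ_subset_iff.1 (by simpa [← sUnion_eq_biUnion] using hcov)⟩

lemma countablyCompactSp_of_forall_tendsto {X : Type*} [TopologicalSpace X]
    (h : ∀ x : ℕ → X, ∃ P : Ultrafilter ℕ, IsFreeUltrafilter P ∧ ∃ L, Tendsto x P (𝓝 L)) :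
    CountablyCompactSp X :=
  countablyCompactSp_of_isCountablyCompact_univ <| .of_seq_clusterPt fun x _ => by
    obtain ⟨P, hP, L, hL⟩ := h x
    exact ⟨L, mem_univ L, hL.mapClusterPt.mono hP.le_atTop⟩

def convergentAlong (G : Type*) [AddGroup G] [TopologicalSpace G] [IsTopologicalAddGroup G]
    {α : Type*} (l : Filter α) : AddSubgroup (α → G) where
  carrier := {f | ∃ a, Tendsto f l (𝓝 a)}
  zero_mem' := ⟨0, tendsto_const_nhds⟩
  add_mem' := fun ⟨a, ha⟩ ⟨b, hb⟩ => ⟨a + b, ha.add hb⟩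
  neg_mem' := fun ⟨a, ha⟩ => ⟨-a, ha.neg⟩

lemma AddSubgroup.le_of_basis {M ι : Type*} [AddCommGroup M] {H K : AddSubgroup M}
    (b : Module.Basis ι ℤ H) (hb : ∀ i, (b i : M) ∈ K) : H ≤ K := by
  have hspan : Submodule.span ℤ (range b) ≤ (K.comap H.subtype).toIntSubmodule :=
    Submodule.span_le.2 (range_subset_iff.2 hb)
  rw [b.span_eq] at hspan
  exact fun x hx => hspan (Submodule.mem_top (x := ⟨x, hx⟩))

lemma linearIndependent_sumElim_insert {K V ι ι' : Type*} [DivisionRing K] [AddCommGroup V]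
    [Module K V] {v : ι → V} {w : ι' → V} {s : Set ι} {a : ι}
    (hs : LinearIndependent K (Sum.elim (fun x : s => v x) w))
    (ha : v a ∉ Submodule.span K (range (Sum.elim (fun x : s => v x) w))) :
    LinearIndependent K (Sum.elim (fun x : ↥(insert a s) => v x) w) := by
  have hcomp : ∀ t : Set ι, Sum.elim (fun x : t => v x) w = Sum.elim v w ∘ Sum.map (↑) id :=
    fun t => by ext (x | x) <;> rfl
  have hinj : ∀ t : Set ι, Function.Injective (Sum.map ((↑) : t → ι) (id : ι' → ι')) :=
    fun t => Subtype.val_injective.sumMap Function.injective_id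
  have hrange : ∀ t : Set ι,
      range (Sum.map ((↑) : t → ι) (id : ι' → ι')) = Sum.inl '' t ∪ range Sum.inr := by
    intro t; ext (x | x) <;> simp
  rw [hcomp, ← linearIndepOn_range_iff (hinj _), hrange, image_insert_eq, insert_union]
  rw [hcomp, ← linearIndepOn_range_iff (hinj _), hrange] at hs
  rw [hcomp, range_comp, hrange] at ha
  exact hs.insert ha

lemma exists_nsmul_mem_closure_of_mem_span_rat {M : Type*} [AddCommGroup M] [Module ℚ M]
    {S : Set M} {x : M} (hx : x ∈ Submodule.span ℚ S) :
    ∃ d : ℕ, 0 < d ∧ d • x ∈ AddSubgroup.closure S := by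
  induction hx using Submodule.span_induction with
  | mem x hx => exact ⟨1, one_pos, by simpa using AddSubgroup.subset_closure hx⟩
  | zero => exact ⟨1, one_pos, by simp⟩
  | add x y _ _ hx hy =>
    obtain ⟨d, hd, hdx⟩ := hx
    obtain ⟨e, he, hey⟩ := hy
    refine ⟨d * e, Nat.mul_pos hd he, ?_⟩
    rw [smul_add, mul_nsmul x d e, mul_nsmul' y d e]
    exact add_mem (nsmul_mem hdx e) (nsmul_mem hey d)
  | smul r x _ hx =>
    obtain ⟨d, hd, hdx⟩ := hx
    refine ⟨d * r.den, Nat.mul_pos hd r.den_pos, ?_⟩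
    have : (d * r.den) • r • x = r.num • d • x := by
      rw [← Nat.cast_smul_eq_nsmul ℚ, ← Nat.cast_smul_eq_nsmul ℚ, ← Int.cast_smul_eq_zsmul ℚ,
        smul_smul, smul_smul, Nat.cast_mul, mul_assoc, ← Rat.mul_den_eq_num]
      ring_nf
    rw [this]
    exact zsmul_mem hdx _

lemma mem_closure_inv_factorial_smul {M : Type*} [AddCommGroup M] [Module ℚ M] {S : Set M}
    {x : M} {d N : ℕ} (hd : 0 < d) (hdN : d ≤ N) (hx : d • x ∈ AddSubgroup.closure S) :
    x ∈ AddSubgroup.closure (((N.factorial : ℚ))⁻¹ • S) := by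
  obtain ⟨t, ht⟩ := Nat.dvd_factorial hd hdN
  have hN : ((d * t : ℕ) : ℚ) ≠ 0 := ht ▸ Nat.cast_ne_zero.2 N.factorial_ne_zero
  have hx' : x = t • ((N.factorial : ℚ))⁻¹ • d • x := by
    rw [← Nat.cast_smul_eq_nsmul ℚ, ← Nat.cast_smul_eq_nsmul ℚ, smul_smul, smul_smul, ht]
    push_cast at hN ⊢
    field_simp
    rw [div_self (right_ne_zero_of_mul hN), one_smul]
  have hmap := AddSubgroup.mem_map_of_mem
    (DistribSMul.toAddMonoidHom M ((N.factorial : ℚ))⁻¹) hx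
  rw [AddMonoidHom.map_closure] at hmap
  rw [hx']
  exact nsmul_mem hmap t

section Ultrapower

variable {κ : Cardinal}

lemma cls_eq_iff {p : Ultrafilter ℕ} {f g : ℕ → GZ κ} :
    cls κ p f = cls κ p g ↔ ∀ᶠ k in (p : Filter ℕ), f k = g k := by
  have hinj : Function.Injective (toQ κ) :=
    Finsupp.mapRange_injective _ Int.cast_zero Int.cast_injective
  simp only [cls, Germ.coe_eq, EventuallyEq, hinj.eq_iff]

lemma tendsto_of_cls_mem_map_convergentAlong [TopologicalSpace (GZ κ)]
    [IsTopologicalAddGroup (GZ κ)] {p : Ultrafilter ℕ} {h : ℕ → GZ κ}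
    (hh : cls κ p h ∈ (convergentAlong (GZ κ) (p : Filter ℕ)).map (clsHom κ p)) :
    ∃ L, Tendsto h p (𝓝 L) := by
  obtain ⟨f, ⟨L, hL⟩, hfh⟩ := hh
  exact ⟨L, hL.congr' (cls_eq_iff.1 hfh)⟩

lemma Gsub_le_map_convergentAlong [TopologicalSpace (GZ κ)] [IsTopologicalAddGroup (GZ κ)]
    {p : Ultrafilter ℕ} {E F : Set (ℕ → GZ κ)} {n : ℕ}
    (b : Module.Basis (Idx κ ⊕ F) ℤ (Gsub κ p E n))
    (hb_chi : ∀ ξ, (b (Sum.inl ξ) : Germ (p : Filter ℕ) (GQ κ)) = clsChi κ p ξ)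
    (hb_F : ∀ g : F, (b (Sum.inr g) : Germ (p : Filter ℕ) (GQ κ)) = cls κ p g)
    (hlim : ∀ f ∈ F, ∃ l, IsPLim p f l) :
    Gsub κ p E n ≤ (convergentAlong (GZ κ) (p : Filter ℕ)).map (clsHom κ p) := by
  refine AddSubgroup.le_of_basis b ?_
  rintro (ξ | g)
  · exact ⟨fun _ => chi κ ξ, ⟨_, tendsto_const_nhds⟩, (hb_chi ξ).symm⟩
  · obtain ⟨l, hl⟩ := hlim g g.2
    exact ⟨g, ⟨l, isPLim_iff_tendsto.1 hl⟩, (hb_F g).symm⟩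

def basicSeqs (κ : Cardinal) (E : Set (ℕ → GZ κ)) : Set (ℕ → GQ κ) :=
  (fun g k => toQ κ (g k)) '' E ∪ range fun ξ (_ : ℕ) => toQ κ (chi κ ξ)

lemma image_coe_basicSeqs (p : Ultrafilter ℕ) (E : Set (ℕ → GZ κ)) :
    ((↑) : (ℕ → GQ κ) → Germ (p : Filter ℕ) (GQ κ)) '' basicSeqs κ E =
      cls κ p '' E ∪ range (clsChi κ p) := by
  rw [basicSeqs, image_union, image_image, ← range_comp]
  rfl

lemma range_sumElim_cls_clsChi (p : Ultrafilter ℕ) (E : Set (ℕ → GZ κ)) :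
    range (Sum.elim (fun f : E => cls κ p f) (clsChi κ p)) =
      cls κ p '' E ∪ range (clsChi κ p) := by
  rw [Sum.elim_range, image_eq_range]

def IsDependentOn (κ : Cardinal) (E : Set (ℕ → GZ κ)) (A : Set ℕ) (h : ℕ → GZ κ) : Prop :=
  ∃ v ∈ Submodule.span ℚ (basicSeqs κ E), EqOn (fun k => toQ κ (h k)) v A

lemma isDependentOn_of_mem {E : Set (ℕ → GZ κ)} {A : Set ℕ} {h : ℕ → GZ κ} (hh : h ∈ E) :
    IsDependentOn κ E A h :=
  ⟨_, Submodule.subset_span (Or.inl ⟨h, hh, rfl⟩), eqOn_refl _ _⟩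

lemma IsDependentOn.mono {E E' : Set (ℕ → GZ κ)} {A A' : Set ℕ} {h : ℕ → GZ κ}
    (hh : IsDependentOn κ E A h) (hE : E ⊆ E') (hA : A' ⊆ A) : IsDependentOn κ E' A' h :=
  let ⟨v, hv, hvh⟩ := hh
  ⟨v, Submodule.span_mono (union_subset_union_left _ (image_mono hE)) hv, hvh.mono hA⟩

lemma IsDependentOn.exists_forall_cls_mem_Gsub {E : Set (ℕ → GZ κ)} {A : Set ℕ}
    {h : ℕ → GZ κ} (hh : IsDependentOn κ E A h) :
    ∃ d, ∀ N ≥ d, ∀ p : Ultrafilter ℕ, A ∈ p → cls κ p h ∈ Gsub κ p E N := by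
  obtain ⟨v, hv, hvh⟩ := hh
  obtain ⟨d, hd, hdv⟩ := exists_nsmul_mem_closure_of_mem_span_rat hv
  refine ⟨d, fun N hN p hA => ⟨⟨h, rfl⟩, ?_⟩⟩
  have hcls : cls κ p h = Germ.coeAddHom (p : Filter ℕ) v :=
    Germ.coe_eq.2 (eventually_of_mem hA hvh)
  have hgens : ((N.factorial : ℚ))⁻¹ • (cls κ p '' E ∪ range (clsChi κ p)) ⊆
      {x | ∃ f ∈ E, x = ((N.factorial : ℚ))⁻¹ • cls κ p f} ∪
        {x | ∃ ξ : Idx κ, x = ((N.factorial : ℚ))⁻¹ • clsChi κ p ξ} := by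
    rintro _ ⟨_, ⟨f, hf, rfl⟩ | ⟨ξ, rfl⟩, rfl⟩
    exacts [Or.inl ⟨f, hf, rfl⟩, Or.inr ⟨ξ, rfl⟩]
  refine AddSubgroup.closure_mono hgens (hcls ▸ mem_closure_inv_factorial_smul hd hN ?_)
  rw [← map_nsmul, ← image_coe_basicSeqs, ← Germ.coe_coeAddHom, ← AddMonoidHom.map_closure]
  exact AddSubgroup.mem_map_of_mem _ hdv

lemma LinIndepMod.insert {A : Set ℕ} {E : Set (ℕ → GZ κ)} {h : ℕ → GZ κ}
    (hE : LinIndepMod κ A E)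
    (hh : ∀ q, IsFreeUltrafilter q → A ∈ q →
      cls κ q h ∉ Submodule.span ℚ (cls κ q '' E ∪ range (clsChi κ q))) :
    LinIndepMod κ A (insert h E) := by
  intro q hq hAq
  obtain ⟨hdist, hli⟩ := hE q hq hAq
  have hnot := hh q hq hAq
  refine ⟨?_, linearIndependent_sumElim_insert hli
    (by rwa [range_sumElim_cls_clsChi])⟩
  have hne : ∀ g ∈ E, cls κ q h ≠ cls κ q g := fun g hg heq =>
    hnot (Submodule.subset_span (Or.inl ⟨g, hg, heq.symm⟩))
  rintro f (rfl | hf) g (rfl | hg) hfg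
  · exact absurd rfl hfg
  · exact hne g hg
  · exact (hne f hf).symm
  · exact hdist f hf g hg hfg

lemma MaximalLinIndepMod.exists_isDependentOn {A : Set ℕ} {E : Set (ℕ → GZ κ)}
    {h : ℕ → GZ κ} (hmax : MaximalLinIndepMod κ A E) (hh : h ∉ E) :
    ∃ B ⊆ A, B.Infinite ∧ IsDependentOn κ E B h := by
  obtain ⟨q, hq, hAq, hspan⟩ : ∃ q, IsFreeUltrafilter q ∧ A ∈ q ∧
      cls κ q h ∈ Submodule.span ℚ (cls κ q '' E ∪ range (clsChi κ q)) := by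
    by_contra! hnot
    exact hh (hmax.2 _ (hmax.1.insert hnot) (subset_insert h E) ▸ mem_insert h E)
  rw [← image_coe_basicSeqs, ← Germ.coe_coeAddHom,
    ← AddMonoidHom.coe_toRatLinearMap, Submodule.span_image] at hspan
  obtain ⟨v, hv, hvh⟩ := hspan
  have hev : ∀ᶠ k in (q : Filter ℕ), toQ κ (h k) = v k := (Germ.coe_eq.1 hvh).symm
  exact ⟨{k | toQ κ (h k) = v k} ∩ A, inter_subset_right,
    hq.infinite_of_mem_s11 (inter_mem hev hAq), v, hv, fun k hk => hk.1⟩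

end Ultrapower

section Towers

lemma isTower_iff {T : List (Set ℕ)} :
    IsTower T ↔ (∀ A ∈ T, A.Infinite) ∧ T.IsChain (fun A B => B ⊆ A) := by
  rw [IsTower, List.isChain_iff_getElem]
  rfl

lemma lastOf_append_singleton (T : List (Set ℕ)) (A : Set ℕ) : lastOf (T ++ [A]) = A :=
  List.getLastD_concat

lemma IsTower.append_singleton {T : List (Set ℕ)} {A : Set ℕ} (hT : IsTower T)
    (hA : A.Infinite) (hAT : A ⊆ lastOf T) : IsTower (T ++ [A]) := by
  rw [isTower_iff] at hT ⊢
  refine ⟨fun B hB => (List.mem_append.1 hB).elim (hT.1 B) fun hB => by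
    rw [List.mem_singleton.1 hB]; exact hA, ?_⟩
  refine List.isChain_append.2 ⟨hT.2, List.isChain_singleton _, fun B hB C hC => ?_⟩
  obtain rfl : C = A := by simpa using hC.symm
  rwa [lastOf, List.getLastD_eq_getLast?, hB] at hAT

variable {κ : Cardinal} {E : List (Set ℕ) → Set (ℕ → GZ κ)}

lemma exists_extension_isDependentOn
    (hEmax : ∀ T, IsTower T → MaximalLinIndepMod κ (lastOf T) (E T))
    (hEmono : ∀ T, IsTower T → ∀ m ≤ T.length, E (T.take m) ⊆ E T)
    {T : List (Set ℕ)} (hT : IsTower T) (h : ℕ → GZ κ) :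
    ∃ T', IsTower T' ∧ E T ⊆ E T' ∧ lastOf T' ⊆ lastOf T ∧
      IsDependentOn κ (E T') (lastOf T') h := by
  by_cases hh : h ∈ E T
  · exact ⟨T, hT, subset_rfl, subset_rfl, isDependentOn_of_mem hh⟩
  obtain ⟨B, hBT, hB, hdep⟩ := (hEmax T hT).exists_isDependentOn hh
  have hT' := hT.append_singleton hB hBT
  have hET : E T ⊆ E (T ++ [B]) := by
    simpa using hEmono _ hT' T.length (by simp)
  refine ⟨T ++ [B], hT', hET, ?_, ?_⟩ <;> rw [lastOf_append_singleton]
  exacts [hBT, hdep.mono hET subset_rfl]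

lemma exists_tower_forall_isDependentOn
    (hEmax : ∀ T, IsTower T → MaximalLinIndepMod κ (lastOf T) (E T))
    (hEmono : ∀ T, IsTower T → ∀ m ≤ T.length, E (T.take m) ⊆ E T) :
    ∀ {m : ℕ} (h : Fin m → ℕ → GZ κ),
      ∃ T, IsTower T ∧ ∀ i, IsDependentOn κ (E T) (lastOf T) (h i)
  | 0, _ => ⟨[], ⟨by simp, by simp⟩, fun i => i.elim0⟩
  | m + 1, h => by
    obtain ⟨T, hT, hdep⟩ := exists_tower_forall_isDependentOn hEmax hEmono (h ∘ Fin.castSucc)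
    obtain ⟨T', hT', hET, hlast, hdep'⟩ :=
      exists_extension_isDependentOn hEmax hEmono hT (h (Fin.last m))
    exact ⟨T', hT', Fin.lastCases hdep' fun i => (hdep i).mono hET hlast⟩

end Towers

theorem statement11_general (κ : Cardinal)
    (p : List (Set ℕ) → ℕ → Ultrafilter ℕ)
    (hsel : ∀ T, IsTower T → ∀ n, IsSelective (p T n))
    (hlast : ∀ T, IsTower T → ∀ n, lastOf T ∈ p T n)
    (E : List (Set ℕ) → Set (ℕ → GZ κ))
    (hEmax : ∀ T, IsTower T → MaximalLinIndepMod κ (lastOf T) (E T))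
    (hEmono : ∀ T, IsTower T → ∀ m ≤ T.length, E (T.take m) ⊆ E T)
    (F : List (Set ℕ) → ℕ → Set (ℕ → GZ κ))
    (hbasis : ∀ T, IsTower T → ∀ n : ℕ,
      ∃ b : Module.Basis ((Idx κ) ⊕ (F T n)) ℤ ↥(Gsub κ (p T n) (E T) n),
        (∀ ξ : Idx κ,
          ((b (Sum.inl ξ) : ↥(Gsub κ (p T n) (E T) n)) :
            Filter.Germ (↑(p T n) : Filter ℕ) (GQ κ)) = clsChi κ (p T n) ξ) ∧
        (∀ g : F T n,
          ((b (Sum.inr g) : ↥(Gsub κ (p T n) (E T) n)) :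
            Filter.Germ (↑(p T n) : Filter ℕ) (GQ κ)) = cls κ (p T n) ↑g))
    [ts : TopologicalSpace (GZ κ)] [tg : @IsTopologicalAddGroup (GZ κ) ts _]
    (hlim : ∀ T, IsTower T → ∀ n : ℕ, ∀ f ∈ F T n, ∃ l : GZ κ, IsPLim (p T n) f l) :
    ∀ m : ℕ, CountablyCompactSp (Fin m → GZ κ) := by
  intro m
  refine countablyCompactSp_of_forall_tendsto fun s => ?_
  obtain ⟨T, hT, hdep⟩ := exists_tower_forall_isDependentOn hEmax hEmono fun i k => s k i
  choose d hd using fun i => (hdep i).exists_forall_cls_mem_Gsub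
  set N := Finset.univ.sup d
  obtain ⟨b, hb_chi, hb_F⟩ := hbasis T hT N
  have hG := Gsub_le_map_convergentAlong b hb_chi hb_F (hlim T hT N)
  choose L hL using fun i => tendsto_of_cls_mem_map_convergentAlong
    (hG (hd i N (Finset.le_sup (Finset.mem_univ i)) _ (hlast T hT N)))
  exact ⟨p T N, (hsel T hT N).1, L, tendsto_pi_nhds.2 hL⟩

theorem statement11 (κ : Cardinal) (hκ : ℵ₀ ≤ κ) (hpow : κ ^ ℵ₀ = κ)
    (p : List (Set ℕ) → ℕ → Ultrafilter ℕ)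
    (hsel : ∀ T, IsTower T → ∀ n, IsSelective (p T n))
    (hinc : ∀ T T', IsTower T → IsTower T' → ∀ n n' : ℕ, (T, n) ≠ (T', n') →
      RKIncomp (p T n) (p T' n'))
    (hlast : ∀ T, IsTower T → ∀ n, lastOf T ∈ p T n)
    (E : List (Set ℕ) → Set (ℕ → GZ κ))
    (hEmax : ∀ T, IsTower T → MaximalLinIndepMod κ (lastOf T) (E T))
    (hEmono : ∀ T, IsTower T → ∀ m ≤ T.length, E (T.take m) ⊆ E T)
    (F : List (Set ℕ) → ℕ → Set (ℕ → GZ κ))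
    (hbasis : ∀ T, IsTower T → ∀ n : ℕ,
      ∃ b : Module.Basis ((Idx κ) ⊕ (F T n)) ℤ ↥(Gsub κ (p T n) (E T) n),
        (∀ ξ : Idx κ,
          ((b (Sum.inl ξ) : ↥(Gsub κ (p T n) (E T) n)) :
            Filter.Germ (↑(p T n) : Filter ℕ) (GQ κ)) = clsChi κ (p T n) ξ) ∧
        (∀ g : F T n,
          ((b (Sum.inr g) : ↥(Gsub κ (p T n) (E T) n)) :
            Filter.Germ (↑(p T n) : Filter ℕ) (GQ κ)) = cls κ (p T n) ↑g))
    [ts : TopologicalSpace (GZ κ)] [tg : @IsTopologicalAddGroup (GZ κ) ts _]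
    (hlim : ∀ T, IsTower T → ∀ n : ℕ, ∀ f ∈ F T n, ∃ l : GZ κ, IsPLim (p T n) f l) :
    ∀ m : ℕ, CountablyCompactSp (Fin m → GZ κ) :=
  statement11_general κ p hsel hlast E hEmax hEmono F hbasis (ts := ts) (tg := tg) hlim

end
end

section
/- Let r ≥ 1 and let θ_0, …, θ_{r−1} be real numbers that are linearly independent over ℚ. Then for every ε > 0 there exists a positive integer L such that for every interval I ⊆ ℝ of length at least L, the set {(θ_0·x + ℤ, …, θ_{r−1}·x + ℤ) : x ∈ I} is ε-dense in 𝕋^r, i.e., every point of 𝕋^r is within distance ε of a point of this set in the Euclidean product metric on 𝕋^r. -/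
open Cardinal Filter Set Pointwise

noncomputable section

open Topology

/-! The closure `G` of `ℤ^r + ℝθ` in `ℝ^r` is a closed subgroup. If it were proper, then after
splitting off the largest subspace it contains, what is left of `G` in a complement is a discrete
subgroup spanning it, i.e. a lattice, and a coordinate of a lattice basis gives a nonzero linear
functional `f` with `f(G) ⊆ ℤ`. The values `f(eᵢ)` are then integers and `f(θ) = 0`, a nontrivial
integer relation among the `θᵢ`. Hence the flow `t ↦ tθ` is dense in `𝕋^r`; by compactness finitely
many times `|t| ≤ T` already come `ε`-close to every point, and translating by the midpoint of an
interval of length `2T` handles every interval. -/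

theorem tendsto_floor_div_mul {α : Type*} {l : Filter α} {c : α → ℝ} (hc0 : ∀ a, 0 < c a)
    (hc : Tendsto c l (𝓝 0)) (t : ℝ) :
    Tendsto (fun a => (⌊t / c a⌋ : ℝ) * c a) l (𝓝 t) := by
  have hlow : Tendsto (fun a => t - c a) l (𝓝 t) := by simpa using tendsto_const_nhds.sub hc
  refine tendsto_of_tendsto_of_tendsto_of_le_of_le hlow tendsto_const_nhds (fun a => ?_) fun a => ?_
  · have := mul_lt_mul_of_pos_right (Int.sub_one_lt_floor (t / c a)) (hc0 a)
    rw [sub_mul, div_mul_cancel₀ _ (hc0 a).ne'] at this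
    dsimp only; linarith
  · exact (le_div_iff₀ (hc0 a)).1 (Int.floor_le _)

theorem Submodule.exists_linearMap_int_of_discreteTopology {F : Type*} [NormedAddCommGroup F]
    [NormedSpace ℝ F] [FiniteDimensional ℝ F] [Nontrivial F] (L : Submodule ℤ F)
    [DiscreteTopology L] (hL : Submodule.span ℝ (L : Set F) = ⊤) :
    ∃ g : F →ₗ[ℝ] ℝ, g ≠ 0 ∧ ∀ x ∈ L, ∃ m : ℤ, g x = m := by
  have : IsZLattice ℝ L := ⟨hL⟩
  let b₀ := Module.Free.chooseBasis ℤ L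
  let b := b₀.ofZLatticeBasis ℝ L
  obtain ⟨i⟩ := b.index_nonempty
  refine ⟨b.coord i, fun h => by simpa using LinearMap.congr_fun h (b i), fun x hx => ?_⟩
  exact ⟨b₀.repr ⟨x, hx⟩ i, b₀.ofZLatticeBasis_repr_apply ℝ L ⟨x, hx⟩ i⟩

namespace AddSubgroup

section Lineality

variable {E : Type*} [AddCommGroup E] [Module ℝ E]

def lineality (G : AddSubgroup E) : Submodule ℝ E where
  carrier := {x | ∀ t : ℝ, t • x ∈ G}
  add_mem' hx hy t := by rw [smul_add]; exact G.add_mem (hx t) (hy t)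
  zero_mem' t := by rw [smul_zero]; exact G.zero_mem
  smul_mem' c x hx t := by rw [smul_smul]; exact hx (t * c)

theorem lineality_le (G : AddSubgroup E) : (G.lineality : Set E) ⊆ G := fun x hx => by
  simpa using hx 1

theorem lineality_eq_top_iff {G : AddSubgroup E} : G.lineality = ⊤ ↔ G = ⊤ := by
  refine ⟨fun h => eq_top_iff.2 fun x _ => G.lineality_le (h ▸ Submodule.mem_top), fun h => ?_⟩
  exact eq_top_iff.2 fun x _ t => h ▸ mem_top _

end Lineality

variable {E : Type*} [NormedAddCommGroup E] [NormedSpace ℝ E] [FiniteDimensional ℝ E]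

theorem lineality_ne_bot_of_forall_exists_norm_lt {G : AddSubgroup E} (hG : IsClosed (G : Set E))
    (h : ∀ δ > 0, ∃ x ∈ G, x ≠ 0 ∧ ‖x‖ < δ) : G.lineality ≠ ⊥ := by
  choose x hxG hx0 hxδ using fun n : ℕ => h (1 / (n + 1)) Nat.one_div_pos_of_nat
  have hpos n : 0 < ‖x n‖ := norm_pos_iff.2 (hx0 n)
  have hx_lim : Tendsto (‖x ·‖) atTop (𝓝 0) :=
    squeeze_zero (fun _ => norm_nonneg _) (fun n => (hxδ n).le)
      tendsto_one_div_add_atTop_nhds_zero_nat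
  obtain ⟨u, hu, φ, hφ, hlim⟩ := (isCompact_sphere (0 : E) 1).tendsto_subseq
    (x := fun n => ‖x n‖⁻¹ • x n) fun n => by simp [norm_smul, (hpos n).ne']
  -- `⌊t / ‖x‖⌋ • x ∈ G` approximates `t • u` along the subsequence
  have hu_mem : u ∈ G.lineality := fun t => by
    refine hG.mem_of_tendsto
      ((tendsto_floor_div_mul (fun n => hpos (φ n)) (hx_lim.comp hφ.tendsto_atTop) t).smul hlim)
      (Eventually.of_forall fun n => ?_)
    simp only [Function.comp_apply, SetLike.mem_coe]
    rw [smul_smul, mul_assoc, mul_inv_cancel₀ (hpos _).ne', mul_one, Int.cast_smul_eq_zsmul]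
    exact G.zsmul_mem (hxG _) _
  intro hbot
  rw [hbot, Submodule.mem_bot] at hu_mem
  simp [hu_mem] at hu

theorem discreteTopology_of_lineality_eq_bot {G : AddSubgroup E} (hG : IsClosed (G : Set E))
    (h : G.lineality = ⊥) : DiscreteTopology G := by
  obtain ⟨δ, hδ, hsmall⟩ : ∃ δ > 0, ∀ x ∈ G, ‖x‖ < δ → x = 0 := by
    by_contra! hcon
    exact lineality_ne_bot_of_forall_exists_norm_lt hG
      (fun δ hδ => let ⟨x, hxG, hxδ, hx0⟩ := hcon δ hδ; ⟨x, hxG, hx0, hxδ⟩) h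
  refine discreteTopology_iff_isOpen_singleton_zero.2 ⟨Metric.ball 0 δ, Metric.isOpen_ball, ?_⟩
  ext x
  simp only [mem_preimage, Metric.mem_ball, dist_zero_right, mem_singleton_iff]
  exact ⟨fun hx => Subtype.ext (hsmall x x.2 hx), fun hx => by simpa [hx] using hδ⟩

theorem exists_linearMap_int_of_isClosed {G : AddSubgroup E} (hG : IsClosed (G : Set E))
    (hspan : Submodule.span ℝ (G : Set E) = ⊤) (hne : G ≠ ⊤) :
    ∃ f : E →ₗ[ℝ] ℝ, f ≠ 0 ∧ ∀ x ∈ G, ∃ m : ℤ, f x = m := by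
  obtain ⟨W, hVW⟩ := G.lineality.exists_isCompl
  let p := W.projectionOnto G.lineality hVW.symm
  have hpG : ∀ x ∈ G, (p x : E) ∈ G := fun x hx => by
    have := G.lineality_le (W.sub_projection_mem hVW.symm x)
    simpa [p, Submodule.coe_projectionOnto_apply] using G.sub_mem hx this
  let A : AddSubgroup W := G.comap W.subtype.toAddMonoidHom
  have hA : IsClosed (A : Set W) := hG.preimage continuous_subtype_val
  have hA_lineality : A.lineality = ⊥ := by
    refine (Submodule.eq_bot_iff _).2 fun u hu => Subtype.ext ?_
    exact (Submodule.disjoint_def.1 hVW.disjoint) u (fun t => hu t) u.2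
  have : DiscreteTopology A.toIntSubmodule := discreteTopology_of_lineality_eq_bot hA hA_lineality
  have : Nontrivial W := Submodule.nontrivial_iff_ne_bot.2 fun hW =>
    hne (lineality_eq_top_iff.1 (by simpa [hW] using hVW.sup_eq_top))
  have hA_span : Submodule.span ℝ (A.toIntSubmodule : Set W) = ⊤ := by
    refine eq_top_iff.2 ?_
    calc ⊤ = (Submodule.span ℝ (G : Set E)).map p := by
          rw [hspan, Submodule.map_top, Submodule.range_projectionOnto]
      _ = Submodule.span ℝ (p '' G) := Submodule.map_span p _
      _ ≤ _ := Submodule.span_mono (image_subset_iff.2 fun x hx => by exact hpG x hx)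
  obtain ⟨g, hg0, hgA⟩ := A.toIntSubmodule.exists_linearMap_int_of_discreteTopology hA_span
  refine ⟨g ∘ₗ p, fun h => hg0 (LinearMap.ext fun w => ?_), fun x hx => hgA (p x) (hpG x hx)⟩
  simpa [p] using LinearMap.congr_fun h w

end AddSubgroup

theorem eq_zero_of_forall_mul_mem_range_intCast {a : ℝ} (h : ∀ t : ℝ, ∃ m : ℤ, t * a = m) :
    a = 0 := by
  by_contra ha
  obtain ⟨m, hm⟩ := h (a⁻¹ / 2)
  rw [div_mul_eq_mul_div, inv_mul_cancel₀ ha, eq_comm, eq_div_iff two_ne_zero] at hm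
  have : m * 2 = 1 := by exact_mod_cast hm
  omega

theorem LinearMap.eq_zero_of_apply_single_mem_range_intCast {ι : Type*} [Fintype ι] [DecidableEq ι]
    {θ : ι → ℝ} (hθ : LinearIndependent ℚ θ) {f : (ι → ℝ) →ₗ[ℝ] ℝ}
    (hint : ∀ i, ∃ m : ℤ, f (Pi.single i 1) = m) (hfθ : f θ = 0) : f = 0 := by
  choose c hc using hint
  have hsingle (i : ι) : (fun j => if i = j then (1 : ℝ) else 0) = Pi.single i 1 := by
    ext j; simp [Pi.single_apply, eq_comm]
  have hc_sum : ∑ i, c i • θ i = 0 := by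
    rw [← hfθ, f.pi_apply_eq_sum_univ θ]
    simp [hsingle, hc, zsmul_eq_mul, mul_comm]
  have hc0 := Fintype.linearIndependent_iff.1 (hθ.restrict_scalars' ℤ) c hc_sum
  refine (Pi.basisFun ℝ ι).ext fun i => ?_
  simp [hc, hc0]

def linearFlow {ι : Type*} (θ : ι → ℝ) : ℝ →+ (ι → AddCircle (1 : ℝ)) :=
  AddMonoidHom.pi fun i => (QuotientAddGroup.mk' _).comp (AddMonoidHom.mulLeft (θ i))

theorem linearFlow_apply {ι : Type*} (θ : ι → ℝ) (t : ℝ) (i : ι) :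
    linearFlow θ t i = ((θ i * t : ℝ) : AddCircle (1 : ℝ)) :=
  rfl

theorem denseRange_linearFlow {ι : Type*} [Fintype ι] {θ : ι → ℝ}
    (hθ : LinearIndependent ℚ θ) : DenseRange (linearFlow θ) := by
  classical
  let π : (ι → ℝ) →+ (ι → AddCircle (1 : ℝ)) := (QuotientAddGroup.mk' _).compLeft ι
  have hπ : Continuous π := continuous_pi fun i => continuous_quot_mk.comp (continuous_apply i)
  have hπ_surj : Function.Surjective π := QuotientAddGroup.mk_surjective.comp_left
  let S := (linearFlow θ).range.comap π
  suffices hS : Dense (S : Set (ι → ℝ)) by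
    rw [DenseRange, ← image_preimage_eq (range (linearFlow θ)) hπ_surj]
    exact hπ_surj.denseRange.dense_image hπ hS
  by_contra hS
  set G := S.topologicalClosure with hG
  have hne : G ≠ ⊤ := fun h => hS <| dense_iff_closure_eq.2 <| by
    rw [← S.topologicalClosure_coe, ← hG, h]; rfl
  have hsingle i : Pi.single i 1 ∈ G := S.le_topologicalClosure ⟨0, by
    ext j
    by_cases hj : j = i
    · subst hj; simp [π, AddCircle.coe_period]
    · simp [π, hj]⟩
  have hθG (t : ℝ) : t • θ ∈ G :=
    S.le_topologicalClosure ⟨t, by ext i; simp [π, linearFlow_apply, mul_comm]⟩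
  have hspan : Submodule.span ℝ (G : Set (ι → ℝ)) = ⊤ := by
    refine eq_top_iff.2 ((Pi.basisFun ℝ ι).span_eq.symm.le.trans (Submodule.span_mono ?_))
    rintro _ ⟨i, rfl⟩
    simpa using hsingle i
  obtain ⟨f, hf0, hfG⟩ :=
    AddSubgroup.exists_linearMap_int_of_isClosed S.isClosed_topologicalClosure hspan hne
  refine hf0 (f.eq_zero_of_apply_single_mem_range_intCast hθ (fun i => hfG _ (hsingle i)) ?_)
  exact eq_zero_of_forall_mul_mem_range_intCast fun t => by simpa using hfG _ (hθG t)

theorem AddMonoidHom.exists_forall_exists_mem_Icc_dist_lt {G : Type*} [SeminormedAddCommGroup G]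
    [CompactSpace G] {φ : ℝ →+ G} (hφ : DenseRange φ) {ε : ℝ} (hε : 0 < ε) :
    ∃ T : ℝ, ∀ (m : ℝ) (y : G), ∃ t ∈ Icc (m - T) (m + T), dist (φ t) y < ε := by
  obtain ⟨I, hI⟩ := isCompact_univ.elim_finite_subcover (fun s : ℝ => Metric.ball (φ s) ε)
    (fun _ => Metric.isOpen_ball) fun y _ => mem_iUnion.2 (hφ.exists_dist_lt y hε)
  refine ⟨∑ s ∈ I, |s|, fun m y => ?_⟩
  obtain ⟨s, hsI, hs⟩ := mem_iUnion₂.1 (hI (mem_univ (y - φ m)))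
  have hsT : |s| ≤ ∑ s ∈ I, |s| := Finset.single_le_sum (fun _ _ => abs_nonneg _) hsI
  refine ⟨m + s, ⟨by linarith [neg_abs_le s], by linarith [le_abs_self s]⟩, ?_⟩
  rw [map_add, dist_comm, dist_eq_norm, ← sub_sub]
  rwa [Metric.mem_ball, dist_eq_norm] at hs

theorem statement17_general (r : ℕ) (θ : Fin r → ℝ)
    (hθ : LinearIndependent ℚ θ) (ε : ℝ) (hε : 0 < ε) :
    ∃ L : ℕ, 0 < L ∧ ∀ a b : ℝ, (L : ℝ) ≤ b - a →
      ∀ y : Fin r → AddCircle (1 : ℝ), ∃ x ∈ Set.Icc a b,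
        Real.sqrt (∑ i, dist ((θ i * x : ℝ) : AddCircle (1 : ℝ)) (y i) ^ 2) ≤ ε := by
  let φ : ℝ →+ PiLp 2 (fun _ : Fin r => AddCircle (1 : ℝ)) :=
    (WithLp.addEquiv 2 _).symm.toAddMonoidHom.comp (linearFlow θ)
  have : CompactSpace (PiLp 2 fun _ : Fin r => AddCircle (1 : ℝ)) :=
    (PiLp.homeomorph 2 _).symm.compactSpace
  have hφ : DenseRange φ := (WithLp.addEquiv 2 _).symm.surjective.denseRange.comp
    (denseRange_linearFlow hθ) (PiLp.continuous_toLp 2 _)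
  obtain ⟨T, hT⟩ := AddMonoidHom.exists_forall_exists_mem_Icc_dist_lt hφ hε
  refine ⟨⌈2 * T⌉₊ + 1, Nat.succ_pos _, fun a b hab y => ?_⟩
  obtain ⟨t, ht, hdist⟩ := hT ((a + b) / 2) (WithLp.toLp 2 y)
  have hT2 : 2 * T ≤ b - a := (Nat.le_ceil _).trans (by push_cast at hab; linarith)
  refine ⟨t, ⟨by linarith [ht.1], by linarith [ht.2]⟩, ?_⟩
  rw [PiLp.dist_eq_of_L2] at hdist
  exact hdist.le

theorem statement17 (r : ℕ) (hr : 1 ≤ r) (θ : Fin r → ℝ)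
    (hθ : LinearIndependent ℚ θ) (ε : ℝ) (hε : 0 < ε) :
    ∃ L : ℕ, 0 < L ∧ ∀ a b : ℝ, (L : ℝ) ≤ b - a →
      ∀ y : Fin r → AddCircle (1 : ℝ), ∃ x ∈ Set.Icc a b,
        Real.sqrt (∑ i, dist ((θ i * x : ℝ) : AddCircle (1 : ℝ)) (y i) ^ 2) ≤ ε :=
  statement17_general r θ hθ ε hε

end
end
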